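/- arXiv:0903.0898 — 7 statements merged into one kernel-verified Lean document; each statement's English description precedes it below -/
import Mathlib

section
/- The number of permutations of length 2n such that the even values occupying odd positions form a decreasing subsequence (i.e., avoiding an increasing pair among even values at odd positions) equals the sum over k from 0 to n of n!·(n−k)!·C(n,k)^3. -/
open Finset

variable (n : ℕ)

def ep (i : Fin n) : Fin (2*n) := ⟨2*(i:ℕ), by omega⟩
def op (i : Fin n) : Fin (2*n) := ⟨2*(i:ℕ)+1, by omega⟩

def avoidP (π : Equiv.Perm (Fin (2*n))) : Prop :=
  ¬ ∃ i j : Fin (2*n), i < j ∧ Even (i:ℕ) ∧ Even (j:ℕ) ∧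
      Odd ((π i : ℕ)) ∧ Odd ((π j : ℕ)) ∧ π i < π j

def decr (g : Fin n → Fin (2*n)) : Prop :=
  ∀ a b : Fin n, a < b → Odd ((g a:ℕ)) → Odd ((g b:ℕ)) → ¬ g a < g b

lemma coe_ep (i : Fin n) : ((ep n i : Fin (2*n)) : ℕ) = 2*(i:ℕ) := rfl
lemma coe_op (i : Fin n) : ((op n i : Fin (2*n)) : ℕ) = 2*(i:ℕ)+1 := rfl

lemma avoid_iff_decr (π : Equiv.Perm (Fin (2*n))) :
    avoidP n π ↔ decr n (fun i => π (ep n i)) := by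
  constructor
  · intro h a b hab ha hb hlt
    refine h ⟨ep n a, ep n b, ?_, ⟨a, by rw [coe_ep]; ring⟩, ⟨b, by rw [coe_ep]; ring⟩,
      ha, hb, hlt⟩
    rw [Fin.lt_def] at hab ⊢
    simp only [coe_ep]; omega
  · rintro h ⟨i, j, hij, hei, hej, hoi, hoj, hlt⟩
    rw [Nat.even_iff] at hei hej
    have hi : (i:ℕ) < 2*n := i.isLt
    have hj : (j:ℕ) < 2*n := j.isLt
    have hepa : ep n ⟨(i:ℕ)/2, by omega⟩ = i := by
      apply Fin.ext; simp only [coe_ep]; omega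
    have hepb : ep n ⟨(j:ℕ)/2, by omega⟩ = j := by
      apply Fin.ext; simp only [coe_ep]; omega
    refine h ⟨(i:ℕ)/2, by omega⟩ ⟨(j:ℕ)/2, by omega⟩ ?_ ?_ ?_ ?_
    · rw [Fin.lt_def] at hij ⊢; simp only; omega
    · show Odd ((π (ep n _) : ℕ)); rw [hepa]; exact hoi
    · show Odd ((π (ep n _) : ℕ)); rw [hepb]; exact hoj
    · show π (ep n _) < π (ep n _); rw [hepa, hepb]; exact hlt

lemma exists_perm_extend {m : ℕ} (E g : Fin m ↪ Fin (2*m)) :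
    ∃ π : Equiv.Perm (Fin (2*m)), ∀ i, π (E i) = g i := by
  classical
  have hcard : Fintype.card ↥(Set.range ⇑E)ᶜ = Fintype.card ↥(Set.range ⇑g)ᶜ := by
    rw [Fintype.card_compl_set, Fintype.card_compl_set,
      Set.card_range_of_injective E.injective, Set.card_range_of_injective g.injective]
  obtain ⟨c⟩ := Fintype.card_eq.mp hcard
  refine ⟨(Equiv.Set.sumCompl (Set.range ⇑E)).symm.trans
    (((E.toEquivRange.symm.trans g.toEquivRange).sumCongr c).trans
      (Equiv.Set.sumCompl (Set.range ⇑g))), ?_⟩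
  intro i
  have h1 : (Equiv.Set.sumCompl (Set.range ⇑E)).symm (E i)
      = Sum.inl ⟨E i, Set.mem_range_self i⟩ := by
    exact Equiv.Set.sumCompl_symm_apply (s := Set.range ⇑E) (x := ⟨E i, Set.mem_range_self i⟩)
  have h2 : E.toEquivRange.symm ⟨E i, Set.mem_range_self i⟩ = i := by
    have : (⟨E i, Set.mem_range_self i⟩ : Set.range ⇑E) = E.toEquivRange i := by
      ext; simp [Function.Embedding.toEquivRange]
    rw [this, Equiv.symm_apply_apply]
  simp [h1, h2, Function.Embedding.toEquivRange]

lemma ep_inj : Function.Injective (ep n) := by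
  intro a b h
  have := congrArg (fun x : Fin (2*n) => (x:ℕ)) h
  simp only [coe_ep] at this
  exact Fin.ext (by omega)

lemma op_inj : Function.Injective (op n) := by
  intro a b h
  have := congrArg (fun x : Fin (2*n) => (x:ℕ)) h
  simp only [coe_op] at this
  exact Fin.ext (by omega)

lemma op_decode {x : Fin (2*n)} (hx : Odd (x:ℕ)) : op n ⟨(x:ℕ)/2, by have := x.isLt; omega⟩ = x := by
  rw [Nat.odd_iff] at hx
  apply Fin.ext; simp only [coe_op]; omega

lemma ep_decode {x : Fin (2*n)} (hx : Even (x:ℕ)) : ep n ⟨(x:ℕ)/2, by have := x.isLt; omega⟩ = x := by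
  rw [Nat.even_iff] at hx
  apply Fin.ext; simp only [coe_ep]; omega

def toSmall (π₀ π : Equiv.Perm (Fin (2*n))) : Fin n → Fin n :=
  fun j => ⟨((π₀.symm (π (op n j)) : Fin (2*n)) : ℕ)/2,
    by have := (π₀.symm (π (op n j))).isLt; omega⟩

lemma odd_decodeVal {g : Fin n → Fin (2*n)} {π₀ π : Equiv.Perm (Fin (2*n))}
    (hπ₀ : ∀ i, π₀ (ep n i) = g i) (hπ : ∀ i, π (ep n i) = g i) (j : Fin n) :
    Odd ((π₀.symm (π (op n j)) : ℕ)) := by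
  rcases Nat.even_or_odd ((π₀.symm (π (op n j)) : ℕ)) with he | ho
  · exfalso
    set x := π₀.symm (π (op n j)) with hxdef
    have hx : ep n ⟨(x:ℕ)/2, by have := x.isLt; omega⟩ = x := ep_decode n he
    have : π (op n j) = π (ep n ⟨(x:ℕ)/2, by have := x.isLt; omega⟩) := by
      rw [hπ, ← hπ₀, hx, hxdef, Equiv.apply_symm_apply]
    have heq := π.injective this
    have := congrArg (fun y : Fin (2*n) => (y:ℕ)) heq
    simp only [coe_op, coe_ep] at this
    omega
  · exact ho

lemma toSmall_inj {g : Fin n → Fin (2*n)} {π₀ π : Equiv.Perm (Fin (2*n))}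
    (hπ₀ : ∀ i, π₀ (ep n i) = g i) (hπ : ∀ i, π (ep n i) = g i) :
    Function.Injective (toSmall n π₀ π) := by
  intro a b h
  have ha := odd_decodeVal n hπ₀ hπ a
  have hb := odd_decodeVal n hπ₀ hπ b
  rw [Nat.odd_iff] at ha hb
  have := congrArg (fun x : Fin n => (x:ℕ)) h
  simp only [toSmall] at this
  have hval : ((π₀.symm (π (op n a)) : Fin (2*n)) : ℕ) = ((π₀.symm (π (op n b)) : Fin (2*n)) : ℕ) := by
    omega
  have := π.injective (π₀.symm.injective (Fin.ext hval))
  have := congrArg (fun x : Fin (2*n) => (x:ℕ)) this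
  simp only [coe_op] at this
  exact Fin.ext (by omega)

noncomputable def toSmallPerm {g : Fin n → Fin (2*n)} (π₀ π : Equiv.Perm (Fin (2*n)))
    (hπ₀ : ∀ i, π₀ (ep n i) = g i) (hπ : ∀ i, π (ep n i) = g i) : Equiv.Perm (Fin n) :=
  Equiv.ofBijective _ (Finite.injective_iff_bijective.mp (toSmall_inj n hπ₀ hπ))

noncomputable def liftO (σ : Equiv.Perm (Fin n)) : Equiv.Perm (Fin (2*n)) :=
  Equiv.ofBijective (fun x : Fin (2*n) =>
    if h : Odd (x:ℕ) then op n (σ ⟨(x:ℕ)/2, by have := x.isLt; omega⟩) else x)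
    (by
      apply Finite.injective_iff_bijective.mp
      intro a b h
      by_cases ha : Odd ((a:ℕ)) <;> by_cases hb : Odd ((b:ℕ)) <;>
        simp only [ha, hb, dif_pos, dif_neg, not_false_iff] at h
      · have h2 := op_inj n h
        have h3 := congrArg (fun x : Fin n => (x:ℕ)) (σ.injective h2)
        simp only at h3
        rw [Nat.odd_iff] at ha hb
        exact Fin.ext (by omega)
      · exfalso; rw [← h] at hb; exact hb (by rw [coe_op]; exact ⟨_, by ring⟩)
      · exfalso; rw [h] at ha; exact ha (by rw [coe_op]; exact ⟨_, by ring⟩)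
      · exact h)

lemma liftO_ep (σ : Equiv.Perm (Fin n)) (i : Fin n) : liftO n σ (ep n i) = ep n i := by
  show (fun x : Fin (2*n) => _) (ep n i) = ep n i
  simp only [liftO, Equiv.ofBijective_apply]
  rw [dif_neg]
  rw [coe_ep, Nat.odd_iff]; omega

lemma liftO_op (σ : Equiv.Perm (Fin n)) (j : Fin n) : liftO n σ (op n j) = op n (σ j) := by
  simp only [liftO, Equiv.ofBijective_apply]
  rw [dif_pos (by rw [coe_op]; exact ⟨_, by ring⟩)]
  congr 1
  congr 1
  apply Fin.ext; simp only [coe_op]; omega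

lemma fiber_card {g : Fin n → Fin (2*n)} (hg : Function.Injective g) :
    (Finset.univ.filter (fun π : Equiv.Perm (Fin (2*n)) => ∀ i, π (ep n i) = g i)).card
      = Nat.factorial n := by
  classical
  obtain ⟨π₀, hπ₀⟩ := exists_perm_extend (⟨ep n, ep_inj n⟩ : Fin n ↪ Fin (2*n)) ⟨g, hg⟩
  have hπ₀' : ∀ i, π₀ (ep n i) = g i := fun i => hπ₀ i
  have hfact : Nat.factorial n = (Finset.univ : Finset (Equiv.Perm (Fin n))).card := by
    rw [Finset.card_univ, Fintype.card_perm, Fintype.card_fin]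
  rw [hfact]
  refine Finset.card_bij'
    (fun π hπ => toSmallPerm n π₀ π hπ₀' (by simpa using (Finset.mem_filter.mp hπ).2))
    (fun σ _ => π₀ * liftO n σ) (fun π hπ => Finset.mem_univ _) ?_ ?_ ?_
  · intro σ _
    simp only [Finset.mem_filter, Finset.mem_univ, true_and]
    intro i
    rw [Equiv.Perm.mul_apply, liftO_ep, hπ₀']
  · intro π hπ
    have hπ' : ∀ i, π (ep n i) = g i := by simpa using (Finset.mem_filter.mp hπ).2
    apply Equiv.ext
    intro x
    rcases Nat.even_or_odd ((x:ℕ)) with he | ho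
    · rw [← ep_decode n he, Equiv.Perm.mul_apply, liftO_ep, hπ₀', hπ']
    · rw [← op_decode n ho, Equiv.Perm.mul_apply, liftO_op]
      show π₀ (op n ((toSmall n π₀ π) _)) = _
      simp only [toSmall]
      rw [op_decode n (odd_decodeVal n hπ₀' hπ' _), Equiv.apply_symm_apply]
  · intro σ _
    apply Equiv.ext
    intro j
    show toSmall n π₀ (π₀ * liftO n σ) j = σ j
    simp only [toSmall, Equiv.Perm.mul_apply, Equiv.symm_apply_apply, liftO_op]
    apply Fin.ext; simp only [coe_op]; omega

instance decrDec : DecidablePred (decr n) := fun g => by unfold decr; infer_instance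
instance avoidDec : DecidablePred (avoidP n) := fun π => by unfold avoidP; infer_instance

def Odds : Finset (Fin (2*n)) := Finset.univ.filter (fun x => Odd (x:ℕ))

lemma odds_card : (Odds n).card = n := by
  have h : Odds n = Finset.image (op n) Finset.univ := by
    ext x
    simp only [Odds, Finset.mem_filter, Finset.mem_univ, true_and, Finset.mem_image]
    constructor
    · intro hx; exact ⟨⟨(x:ℕ)/2, by have := x.isLt; omega⟩, op_decode n hx⟩
    · rintro ⟨j, rfl⟩; rw [coe_op]; exact ⟨_, by ring⟩
  rw [h, Finset.card_image_of_injective _ (op_inj n), Finset.card_univ, Fintype.card_fin]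

def evensEquiv : Fin n ≃ {x : Fin (2*n) // Even (x:ℕ)} where
  toFun i := ⟨ep n i, ⟨(i:ℕ), by rw [coe_ep]; ring⟩⟩
  invFun x := ⟨((x.1 : ℕ))/2, by have := x.1.isLt; omega⟩
  left_inv i := by
    apply Fin.ext
    show ((ep n i : Fin (2*n)) : ℕ)/2 = (i:ℕ)
    rw [coe_ep]; omega
  right_inv x := by
    apply Subtype.ext
    exact ep_decode n x.2

lemma evens_card : Fintype.card {x : Fin (2*n) // Even (x:ℕ)} = n := by
  rw [← Fintype.card_congr (evensEquiv n), Fintype.card_fin]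

lemma injFun_card (s : Finset (Fin n)) :
    (Finset.univ.filter (fun u : {i : Fin n // i ∉ s} → {x : Fin (2*n) // Even (x:ℕ)} =>
      Function.Injective u)).card = Nat.descFactorial n (n - s.card) := by
  classical
  rw [← Fintype.card_subtype, Fintype.card_congr (Equiv.subtypeInjectiveEquivEmbedding _ _),
    Fintype.card_embedding_eq, evens_card, Fintype.card_subtype_compl, Fintype.card_fin,
    Fintype.card_coe]

def forced (s : Finset (Fin n)) (t : Finset (Fin (2*n))) (hst : t.card = s.card)
    (i : Fin n) (h : i ∈ s) : Fin (2*n) :=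
  t.orderEmbOfFin hst (((s.orderIsoOfFin rfl).symm ⟨i, h⟩).rev)

lemma forced_mem {s : Finset (Fin n)} {t : Finset (Fin (2*n))} (hst : t.card = s.card)
    {i : Fin n} (h : i ∈ s) : forced n s t hst i h ∈ t :=
  Finset.orderEmbOfFin_mem t hst _

lemma forced_anti {s : Finset (Fin n)} {t : Finset (Fin (2*n))} (hst : t.card = s.card)
    {i j : Fin n} (hi : i ∈ s) (hj : j ∈ s) (hij : i < j) :
    forced n s t hst j hj < forced n s t hst i hi := by
  apply (t.orderEmbOfFin hst).strictMono
  rw [Fin.rev_lt_rev]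
  exact (s.orderIsoOfFin rfl).symm.strictMono (Subtype.mk_lt_mk.mpr hij)

lemma forced_inj {s : Finset (Fin n)} {t : Finset (Fin (2*n))} (hst : t.card = s.card)
    {i j : Fin n} (hi : i ∈ s) (hj : j ∈ s)
    (h : forced n s t hst i hi = forced n s t hst j hj) : i = j := by
  rcases lt_trichotomy i j with hlt | heq | hlt
  · exact absurd h (ne_of_gt (forced_anti n hst hi hj hlt))
  · exact heq
  · exact absurd h (ne_of_lt (forced_anti n hst hj hi hlt))

lemma eq_forced {s : Finset (Fin n)} {t : Finset (Fin (2*n))} (hst : t.card = s.card)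
    {g : Fin n → Fin (2*n)} (hinj : Function.Injective g) (hdecr : decr n g)
    (hodd : Finset.univ.filter (fun i => Odd ((g i : ℕ))) = s) (himg : s.image g = t) :
    ∀ (i : Fin n) (h : i ∈ s), g i = forced n s t hst i h := by
  have hods : ∀ i : Fin n, i ∈ s ↔ Odd ((g i : ℕ)) := by
    intro i
    rw [← hodd]
    simp
  have hψ : (fun j : Fin s.card => g ((s.orderIsoOfFin rfl) j.rev : Fin n))
      = ⇑(t.orderEmbOfFin hst) := by
    apply Finset.orderEmbOfFin_unique
    · intro j
      rw [← himg]
      exact Finset.mem_image_of_mem g ((s.orderIsoOfFin rfl) j.rev).2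
    · intro j j' hjj
      have h1 : j'.rev < j.rev := Fin.rev_lt_rev.mpr hjj
      have h2 : ((s.orderIsoOfFin rfl) j'.rev) < ((s.orderIsoOfFin rfl) j.rev) :=
        (s.orderIsoOfFin rfl).strictMono h1
      set a' : Fin n := ((s.orderIsoOfFin rfl) j'.rev : Fin n)
      set a : Fin n := ((s.orderIsoOfFin rfl) j.rev : Fin n)
      have ha' : a' ∈ s := ((s.orderIsoOfFin rfl) j'.rev).2
      have ha : a ∈ s := ((s.orderIsoOfFin rfl) j.rev).2
      have hlt : a' < a := Subtype.coe_lt_coe.mpr h2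
      have hne : g a ≠ g a' := fun hc => (ne_of_gt hlt) (hinj hc)
      have := hdecr a' a hlt ((hods a').mp ha') ((hods a).mp ha)
      exact lt_of_le_of_ne (le_of_not_gt this) hne
  intro i h
  set m := (s.orderIsoOfFin rfl).symm ⟨i, h⟩ with hm
  have h1 : g ((s.orderIsoOfFin rfl) m.rev.rev : Fin n) = t.orderEmbOfFin hst m.rev :=
    congrFun hψ m.rev
  rw [Fin.rev_rev, hm, OrderIso.apply_symm_apply] at h1
  exact h1

lemma image_eq_t {s : Finset (Fin n)} {t : Finset (Fin (2*n))} (hst : t.card = s.card)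
    {g : Fin n → Fin (2*n)} (hg : ∀ (i : Fin n) (h : i ∈ s), g i = forced n s t hst i h) :
    s.image g = t := by
  apply Finset.eq_of_subset_of_card_le
  · intro x hx
    obtain ⟨i, hi, rfl⟩ := Finset.mem_image.mp hx
    rw [hg i hi]
    exact forced_mem n hst hi
  · rw [Finset.card_image_of_injOn, hst]
    intro a ha b hb hab
    simp only [Finset.mem_coe] at ha hb
    rw [hg a ha, hg b hb] at hab
    exact forced_inj n hst ha hb hab

lemma mem_odds {x : Fin (2*n)} : x ∈ Odds n ↔ Odd (x:ℕ) := by simp [Odds]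

def fwdMap (s : Finset (Fin n)) (g : Fin n → Fin (2*n)) :
    {i : Fin n // i ∉ s} → {x : Fin (2*n) // Even (x:ℕ)} := fun i =>
  ⟨ep n ⟨((g i.1 : ℕ))/2, by have := (g i.1).isLt; omega⟩, ⟨_, by rw [coe_ep]; ring⟩⟩

def bwdMap (s : Finset (Fin n)) (t : Finset (Fin (2*n))) (hst : t.card = s.card)
    (u : {i : Fin n // i ∉ s} → {x : Fin (2*n) // Even (x:ℕ)}) : Fin n → Fin (2*n) :=
  fun i => if h : i ∈ s then forced n s t hst i h else (u ⟨i, h⟩ : Fin (2*n))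

lemma bwdMap_in (s : Finset (Fin n)) (t : Finset (Fin (2*n))) (hst : t.card = s.card)
    (u : {i : Fin n // i ∉ s} → {x : Fin (2*n) // Even (x:ℕ)}) (i : Fin n) (h : i ∈ s) :
    bwdMap n s t hst u i = forced n s t hst i h := dif_pos h

lemma bwdMap_out (s : Finset (Fin n)) (t : Finset (Fin (2*n))) (hst : t.card = s.card)
    (u : {i : Fin n // i ∉ s} → {x : Fin (2*n) // Even (x:ℕ)}) (i : Fin n) (h : i ∉ s) :
    bwdMap n s t hst u i = (u ⟨i, h⟩ : Fin (2*n)) := dif_neg h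

lemma subfiber_card (s : Finset (Fin n)) (t : Finset (Fin (2*n)))
    (htO : t ⊆ Odds n) (hst : t.card = s.card) :
    (Finset.filter (fun g => Finset.image g s = t)
      (Finset.filter (fun g => Finset.univ.filter (fun i => Odd ((g i : ℕ))) = s)
        (Finset.univ.filter (fun g : Fin n → Fin (2*n) =>
          Function.Injective g ∧ decr n g)))).card
    = Nat.descFactorial n (n - s.card) := by
  rw [← injFun_card n s]
  have unpack : ∀ g, g ∈ (Finset.filter (fun g => Finset.image g s = t)
      (Finset.filter (fun g => Finset.univ.filter (fun i => Odd ((g i : ℕ))) = s)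
        (Finset.univ.filter (fun g : Fin n → Fin (2*n) =>
          Function.Injective g ∧ decr n g)))) →
      Function.Injective g ∧ decr n g ∧
        (Finset.univ.filter (fun i => Odd ((g i : ℕ))) = s) ∧ Finset.image g s = t := by
    intro g hg
    simp only [Finset.mem_filter, Finset.mem_univ, true_and] at hg
    tauto
  have evenval : ∀ (g : Fin n → Fin (2*n)),
      (Finset.univ.filter (fun i => Odd ((g i : ℕ))) = s) →
      ∀ i : Fin n, i ∉ s → Even ((g i : ℕ)) := by
    intro g hodd i hi
    rw [← Nat.not_odd_iff_even]
    intro ho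
    exact hi (by rw [← hodd]; simp [ho])
  refine Finset.card_bij' (fun g _ => fwdMap n s g) (fun u _ => bwdMap n s t hst u)
    ?_ ?_ ?_ ?_
  · -- forward lands in injective functions
    intro g hg
    have hinj := (unpack g hg).1
    have hodd := (unpack g hg).2.2.1
    simp only [Finset.mem_filter, Finset.mem_univ, true_and]
    intro a b hab
    have h1 : ((g a.1 : ℕ))/2 = ((g b.1 : ℕ))/2 := by
      have := congrArg (fun x : {x : Fin (2*n) // Even (x:ℕ)} => ((x : Fin (2*n)) : ℕ)) hab
      simp only [fwdMap, coe_ep] at this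
      omega
    have hea := evenval g hodd a.1 a.2
    have heb := evenval g hodd b.1 b.2
    rw [Nat.even_iff] at hea heb
    have : g a.1 = g b.1 := Fin.ext (by omega)
    exact Subtype.ext (hinj this)
  · -- backward lands in subfiber
    intro u hu
    have huinj : Function.Injective u := by
      simpa using (Finset.mem_filter.mp hu).2
    have hodd_in : ∀ (i : Fin n) (h : i ∈ s), Odd ((bwdMap n s t hst u i : ℕ)) := by
      intro i h
      rw [bwdMap_in n s t hst u i h]
      exact (mem_odds n).mp (htO (forced_mem n hst h))
    have heven_out : ∀ (i : Fin n) (h : i ∉ s), Even ((bwdMap n s t hst u i : ℕ)) := by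
      intro i h
      rw [bwdMap_out n s t hst u i h]
      exact (u ⟨i, h⟩).2
    have hoddset : Finset.univ.filter (fun i => Odd ((bwdMap n s t hst u i : ℕ))) = s := by
      ext i
      simp only [Finset.mem_filter, Finset.mem_univ, true_and]
      constructor
      · intro ho
        by_contra h
        have := heven_out i h
        rw [Nat.even_iff] at this
        rw [Nat.odd_iff] at ho
        omega
      · exact hodd_in i
    have hinj : Function.Injective (bwdMap n s t hst u) := by
      intro a b hab
      by_cases ha : a ∈ s <;> by_cases hb : b ∈ s
      · rw [bwdMap_in n s t hst u a ha, bwdMap_in n s t hst u b hb] at hab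
        exact forced_inj n hst ha hb hab
      · exfalso
        have h1 := hodd_in a ha; have h2 := heven_out b hb
        rw [hab, Nat.odd_iff] at h1; rw [Nat.even_iff] at h2; omega
      · exfalso
        have h1 := hodd_in b hb; have h2 := heven_out a ha
        rw [← hab, Nat.odd_iff] at h1; rw [Nat.even_iff] at h2; omega
      · rw [bwdMap_out n s t hst u a ha, bwdMap_out n s t hst u b hb] at hab
        have := huinj (Subtype.ext hab)
        have := congrArg (fun x : {i : Fin n // i ∉ s} => x.1) this
        exact this
    have hdecr : decr n (bwdMap n s t hst u) := by
      intro a b hab hoa hob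
      have ha : a ∈ s := by
        by_contra h
        have := heven_out a h
        rw [Nat.even_iff] at this; rw [Nat.odd_iff] at hoa; omega
      have hb : b ∈ s := by
        by_contra h
        have := heven_out b h
        rw [Nat.even_iff] at this; rw [Nat.odd_iff] at hob; omega
      rw [bwdMap_in n s t hst u a ha, bwdMap_in n s t hst u b hb]
      exact not_lt.mpr (le_of_lt (forced_anti n hst ha hb hab))
    simp only [Finset.mem_filter, Finset.mem_univ, true_and]
    exact ⟨⟨⟨hinj, hdecr⟩, hoddset⟩,
      image_eq_t n hst (fun i h => bwdMap_in n s t hst u i h)⟩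
  · -- left inverse
    intro g hg
    obtain ⟨hinj, hdecr, hodd, himg⟩ := unpack g hg
    show bwdMap n s t hst (fwdMap n s g) = g
    funext i
    by_cases h : i ∈ s
    · rw [bwdMap_in n s t hst _ i h]
      exact (eq_forced n hst hinj hdecr hodd himg i h).symm
    · rw [bwdMap_out n s t hst _ i h]
      show ep n _ = g i
      exact ep_decode n (evenval g hodd i h)
  · -- right inverse
    intro u hu
    show fwdMap n s (bwdMap n s t hst u) = u
    funext i
    apply Subtype.ext
    have h2 : bwdMap n s t hst u i.1 = (u i : Fin (2*n)) := by
      rw [bwdMap_out n s t hst u i.1 i.2]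
    have heven : Even ((bwdMap n s t hst u i.1 : ℕ)) := by
      rw [h2]; exact (u i).2
    show ep n ⟨((bwdMap n s t hst u i.1 : ℕ))/2, _⟩ = (u i : Fin (2*n))
    exact (ep_decode n heven).trans h2

lemma fiber_s_card (s : Finset (Fin n)) :
    (Finset.filter (fun g => Finset.univ.filter (fun i => Odd ((g i : ℕ))) = s)
      (Finset.univ.filter (fun g : Fin n → Fin (2*n) =>
        Function.Injective g ∧ decr n g))).card
    = Nat.choose n s.card * Nat.descFactorial n (n - s.card) := by
  have H : ∀ g ∈ (Finset.filter (fun g => Finset.univ.filter (fun i => Odd ((g i : ℕ))) = s)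
      (Finset.univ.filter (fun g : Fin n → Fin (2*n) =>
        Function.Injective g ∧ decr n g))),
      Finset.image g s ∈ Finset.powersetCard s.card (Odds n) := by
    intro g hg
    simp only [Finset.mem_filter, Finset.mem_univ, true_and] at hg
    obtain ⟨⟨hinj, hdecr⟩, hodd⟩ := hg
    rw [Finset.mem_powersetCard]
    constructor
    · intro x hx
      obtain ⟨i, hi, rfl⟩ := Finset.mem_image.mp hx
      rw [mem_odds]
      have : i ∈ Finset.univ.filter (fun i => Odd ((g i : ℕ))) := hodd ▸ hi
      simpa using this
    · exact Finset.card_image_of_injective s hinj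
  rw [Finset.card_eq_sum_card_fiberwise H]
  have e : ∀ t ∈ Finset.powersetCard s.card (Odds n),
      (Finset.filter (fun g => Finset.image g s = t)
        (Finset.filter (fun g => Finset.univ.filter (fun i => Odd ((g i : ℕ))) = s)
          (Finset.univ.filter (fun g : Fin n → Fin (2*n) =>
            Function.Injective g ∧ decr n g)))).card
      = Nat.descFactorial n (n - s.card) := by
    intro t ht
    obtain ⟨htO, hst⟩ := Finset.mem_powersetCard.mp ht
    exact subfiber_card n s t htO hst
  rw [Finset.sum_congr rfl e, Finset.sum_const, smul_eq_mul, Finset.card_powersetCard,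
    odds_card]

lemma G_card :
    (Finset.univ.filter (fun g : Fin n → Fin (2*n) =>
      Function.Injective g ∧ decr n g)).card
    = ∑ k ∈ Finset.range (n+1), Nat.choose n k ^ 2 * Nat.descFactorial n (n - k) := by
  have H : ∀ g ∈ (Finset.univ.filter (fun g : Fin n → Fin (2*n) =>
      Function.Injective g ∧ decr n g)),
      Finset.univ.filter (fun i => Odd ((g i : ℕ))) ∈
        (Finset.univ : Finset (Fin n)).powerset := by
    intro g _
    exact Finset.mem_powerset.mpr (Finset.filter_subset _ _)
  rw [Finset.card_eq_sum_card_fiberwise H,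
    Finset.sum_congr rfl (fun s _ => fiber_s_card n s), Finset.sum_powerset,
    Finset.card_univ, Fintype.card_fin]
  apply Finset.sum_congr rfl
  intro k hk
  have e : ∀ s ∈ Finset.powersetCard k (Finset.univ : Finset (Fin n)),
      Nat.choose n s.card * Nat.descFactorial n (n - s.card)
      = Nat.choose n k * Nat.descFactorial n (n - k) := by
    intro s hs
    rw [(Finset.mem_powersetCard.mp hs).2]
  rw [Finset.sum_congr rfl e, Finset.sum_const, smul_eq_mul, Finset.card_powersetCard,
    Finset.card_univ, Fintype.card_fin]
  ring

lemma A_card :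
    (Finset.univ.filter (avoidP n)).card
    = (Finset.univ.filter (fun g : Fin n → Fin (2*n) =>
        Function.Injective g ∧ decr n g)).card * Nat.factorial n := by
  have H : ∀ π ∈ Finset.univ.filter (avoidP n),
      (fun i => π (ep n i)) ∈ Finset.univ.filter (fun g : Fin n → Fin (2*n) =>
        Function.Injective g ∧ decr n g) := by
    intro π hπ
    simp only [Finset.mem_filter, Finset.mem_univ, true_and] at hπ ⊢
    constructor
    · intro a b hab
      exact ep_inj n (π.injective hab)
    · exact (avoid_iff_decr n π).mp hπ
  rw [Finset.card_eq_sum_card_fiberwise H]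
  have e : ∀ g ∈ Finset.univ.filter (fun g : Fin n → Fin (2*n) =>
      Function.Injective g ∧ decr n g),
      (Finset.filter (fun π => (fun i => π (ep n i)) = g)
        (Finset.univ.filter (avoidP n))).card = Nat.factorial n := by
    intro g hg
    simp only [Finset.mem_filter, Finset.mem_univ, true_and] at hg
    have heq : (Finset.filter (fun π => (fun i => π (ep n i)) = g)
        (Finset.univ.filter (avoidP n)))
        = Finset.univ.filter (fun π : Equiv.Perm (Fin (2*n)) => ∀ i, π (ep n i) = g i) := by
      ext π
      simp only [Finset.mem_filter, Finset.mem_univ, true_and]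
      constructor
      · rintro ⟨_, h2⟩
        exact fun i => congrFun h2 i
      · intro h2
        have hfe : (fun i => π (ep n i)) = g := funext h2
        refine ⟨?_, hfe⟩
        rw [avoid_iff_decr, hfe]
        exact hg.2
    rw [heq, fiber_card n hg.1]
  rw [Finset.sum_congr rfl e, Finset.sum_const, smul_eq_mul]

/-- Permutations of {1,...,2n} are modeled as `Equiv.Perm (Fin (2*n))`, where
`i : Fin (2*n)` represents the 1-indexed position/value `i+1`.  Thus a 1-indexed
*odd position* corresponds to `Even (i : ℕ)` and a 1-indexed *even value*
corresponds to `Odd ((π i : ℕ))`.  The permutation avoids the pattern `P` when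
there is no pair of odd positions `i < j` carrying even values with
`π i < π j`. -/
theorem stmt0 (n : ℕ) :
    Nat.card {π : Equiv.Perm (Fin (2 * n)) //
      ¬ ∃ i j : Fin (2 * n), i < j ∧ Even (i : ℕ) ∧ Even (j : ℕ) ∧
        Odd ((π i : ℕ)) ∧ Odd ((π j : ℕ)) ∧ π i < π j} =
    ∑ k ∈ Finset.range (n + 1),
      Nat.factorial n * Nat.factorial (n - k) * (Nat.choose n k) ^ 3 := by
  have h1 : Nat.card {π : Equiv.Perm (Fin (2 * n)) //
      ¬ ∃ i j : Fin (2 * n), i < j ∧ Even (i : ℕ) ∧ Even (j : ℕ) ∧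
        Odd ((π i : ℕ)) ∧ Odd ((π j : ℕ)) ∧ π i < π j}
      = (Finset.univ.filter (avoidP n)).card := by
    rw [Nat.card_eq_fintype_card, Fintype.card_subtype]
    congr 1
  rw [h1, A_card, G_card, Finset.sum_mul]
  apply Finset.sum_congr rfl
  intro k hk
  have hkn : k ≤ n := by
    have := Finset.mem_range.mp hk; omega
  rw [Nat.descFactorial_eq_factorial_mul_choose, Nat.choose_symm hkn]
  ring
end

section
/- For any fixed m, the number of permutations of length 2n containing exactly m occurrences of the pattern P (an occurrence of a classical pattern p of length t restricted so that all positions involved are odd and all values involved are even) equals the sum over k from 0 to n of n!·(n−k)!·C(n,k)^3·A_{k,m}, where A_{k,m} is the number of permutations of length k containing exactly m occurrences of p as a classical pattern. -/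
/-- The number of occurrences of a classical pattern `p` (of length `t`) in a
permutation `σ` of length `k`: the number of strictly increasing position
sequences `f : Fin t → Fin k` such that `σ ∘ f` is order isomorphic to `p`. -/
noncomputable def occClassical {t k : ℕ} (p : Equiv.Perm (Fin t)) (σ : Equiv.Perm (Fin k)) : ℕ :=
  Nat.card {f : Fin t → Fin k //
    (∀ a b : Fin t, a < b → f a < f b) ∧
    (∀ a b : Fin t, σ (f a) < σ (f b) ↔ p a < p b)}

/-- The number of occurrences of the PDVP `P` in a permutation `π` of length `2n`:
occurrences of `p` all of whose positions are odd (1-indexed, i.e. `Even (i : ℕ)`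
for the 0-indexed `i`) and all of whose values are even (1-indexed, i.e.
`Odd ((π i : ℕ))`). -/
noncomputable def occPDVP {t n : ℕ} (p : Equiv.Perm (Fin t)) (π : Equiv.Perm (Fin (2 * n))) : ℕ :=
  Nat.card {f : Fin t → Fin (2 * n) //
    (∀ a b : Fin t, a < b → f a < f b) ∧
    (∀ a : Fin t, Even ((f a : ℕ))) ∧
    (∀ a : Fin t, Odd ((π (f a) : ℕ))) ∧
    (∀ a b : Fin t, π (f a) < π (f b) ↔ p a < p b)}

open Finset Equiv

namespace PDVPaux

variable {n k t : ℕ}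

/-- even-coded element -/
def db (x : Fin n) : Fin (2*n) := ⟨2*x, by omega⟩
/-- odd-coded element -/
def db1 (x : Fin n) : Fin (2*n) := ⟨2*x+1, by omega⟩

lemma db_inj : Function.Injective (db (n := n)) := by
  intro a b h; simp only [db, Fin.mk.injEq] at h; exact Fin.ext (by omega)

lemma db1_inj : Function.Injective (db1 (n := n)) := by
  intro a b h; simp only [db1, Fin.mk.injEq] at h; exact Fin.ext (by omega)

lemma db_lt_iff {a b : Fin n} : db a < db b ↔ a < b := by
  simp only [db, Fin.lt_def]; omega
lemma db1_lt_iff {a b : Fin n} : db1 a < db1 b ↔ a < b := by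
  simp only [db1, Fin.lt_def]; omega

lemma db_ne_db1 (a b : Fin n) : db a ≠ db1 b := by
  simp only [db, db1, ne_eq, Fin.mk.injEq]; omega

/-- decompose any element of Fin (2n) as db or db1 -/
lemma cases_db (i : Fin (2*n)) : (∃ x, i = db x) ∨ (∃ x, i = db1 x) := by
  have hi := i.isLt
  rcases Nat.even_or_odd (i : ℕ) with ⟨c, hc⟩ | ⟨c, hc⟩
  · exact Or.inl ⟨⟨(i : ℕ)/2, by omega⟩, Fin.ext (by simp only [db]; omega)⟩
  · exact Or.inr ⟨⟨(i : ℕ)/2, by omega⟩, Fin.ext (by simp only [db1]; omega)⟩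

lemma even_db (x : Fin n) : Even ((db x : ℕ)) := ⟨x, by simp [db]; ring⟩
lemma odd_db1 (x : Fin n) : Odd ((db1 x : ℕ)) := ⟨x, by simp [db1]⟩

end PDVPaux
namespace PDVPaux
variable {n k t : ℕ}

/-- positions x (even-coded) where value is odd-coded -/
def Sset (π : Perm (Fin (2*n))) : Finset (Fin n) :=
  univ.filter (fun x => Odd ((π (db x) : ℕ)))

def kap (π : Perm (Fin (2*n))) : ℕ := (Sset π).card

lemma kap_le (π : Perm (Fin (2*n))) : kap π ≤ n :=
  le_trans (card_filter_le _ _) (by simp)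

def Tset (π : Perm (Fin (2*n))) : Finset (Fin n) :=
  univ.filter (fun y => Even ((π.symm (db1 y) : ℕ)))

/-- decode an odd-coded value -/
def half1 (v : Fin (2*n)) : Fin n := ⟨(v : ℕ)/2, by have := v.isLt; omega⟩
def half0 (v : Fin (2*n)) : Fin n := ⟨(v : ℕ)/2, by have := v.isLt; omega⟩

lemma db1_half1 {v : Fin (2*n)} (hv : Odd (v : ℕ)) : db1 (half1 v) = v := by
  rcases hv with ⟨c, hc⟩; exact Fin.ext (by simp only [db1, half1]; omega)

lemma db_half0 {v : Fin (2*n)} (hv : Even (v : ℕ)) : db (half0 v) = v := by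
  rcases hv with ⟨c, hc⟩; exact Fin.ext (by simp only [db, half0]; omega)

lemma half1_db1 (x : Fin n) : half1 (db1 x) = x := Fin.ext (by simp only [db1, half1]; omega)
lemma half0_db (x : Fin n) : half0 (db x) = x := Fin.ext (by simp only [db, half0]; omega)

lemma mem_Sset {π : Perm (Fin (2*n))} {x : Fin n} :
    x ∈ Sset π ↔ Odd ((π (db x) : ℕ)) := by simp [Sset]

lemma mem_Tset {π : Perm (Fin (2*n))} {y : Fin n} :
    y ∈ Tset π ↔ Even ((π.symm (db1 y) : ℕ)) := by simp [Tset]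

lemma card_Tset (π : Perm (Fin (2*n))) : (Tset π).card = kap π := by
  rw [kap]
  apply Finset.card_bij (fun y _ => half0 (π.symm (db1 y)))
  · intro y hy
    rw [mem_Sset]
    rw [mem_Tset] at hy
    rw [db_half0 hy, Equiv.apply_symm_apply]
    exact odd_db1 y
  · intro a ha b hb hab
    rw [mem_Tset] at ha hb
    have := congrArg db hab
    rw [db_half0 ha, db_half0 hb] at this
    exact db1_inj (π.symm.injective this)
  · intro x hx
    rw [mem_Sset] at hx
    refine ⟨half1 (π (db x)), ?_, ?_⟩
    · rw [mem_Tset, db1_half1 hx, Equiv.symm_apply_apply]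
      exact even_db x
    · rw [db1_half1 hx, Equiv.symm_apply_apply, half0_db]

end PDVPaux
namespace PDVPaux
variable {n k t : ℕ}

lemma half1_mem_Tset {π : Perm (Fin (2*n))} {x : Fin n} (hx : x ∈ Sset π) :
    half1 (π (db x)) ∈ Tset π := by
  rw [mem_Sset] at hx
  rw [mem_Tset, db1_half1 hx, Equiv.symm_apply_apply]
  exact even_db x

variable (π : Perm (Fin (2*n))) (hκ : kap π = k)

/-- the classical pattern of π on its special positions -/
noncomputable def pattFun : Fin k → Fin k := fun j =>
  ((Tset π).orderIsoOfFin ((card_Tset π).trans hκ)).symm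
    ⟨half1 (π (db (((Sset π).orderIsoOfFin hκ j) : Fin n))),
     half1_mem_Tset ((Sset π).orderIsoOfFin hκ j).2⟩

lemma pattFun_spec (j : Fin k) :
    π (db (((Sset π).orderIsoOfFin hκ j) : Fin n)) =
      db1 ((((Tset π).orderIsoOfFin ((card_Tset π).trans hκ)) (pattFun π hκ j) : Fin n)) := by
  rw [pattFun, OrderIso.apply_symm_apply]
  exact (db1_half1 (mem_Sset.mp ((Sset π).orderIsoOfFin hκ j).2)).symm

lemma pattFun_lt_iff (a b : Fin k) :
    pattFun π hκ a < pattFun π hκ b ↔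
      π (db (((Sset π).orderIsoOfFin hκ a) : Fin n)) <
        π (db (((Sset π).orderIsoOfFin hκ b) : Fin n)) := by
  rw [pattFun_spec π hκ a, pattFun_spec π hκ b, db1_lt_iff]
  constructor
  · intro h
    exact_mod_cast (((Tset π).orderIsoOfFin ((card_Tset π).trans hκ)).lt_iff_lt).mpr h
  · intro h
    exact (((Tset π).orderIsoOfFin ((card_Tset π).trans hκ)).lt_iff_lt).mp (by exact_mod_cast h)

lemma pattFun_inj : Function.Injective (pattFun π hκ) := by
  intro a b hab
  have h1 := congrArg (fun z => (((Tset π).orderIsoOfFin ((card_Tset π).trans hκ)) z : Fin n)) hab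
  have h2 : π (db (((Sset π).orderIsoOfFin hκ a) : Fin n)) =
      π (db (((Sset π).orderIsoOfFin hκ b) : Fin n)) := by
    rw [pattFun_spec π hκ a, pattFun_spec π hκ b, h1]
  have h3 := db_inj (π.injective h2)
  have h4 : ((Sset π).orderIsoOfFin hκ a) = ((Sset π).orderIsoOfFin hκ b) := Subtype.ext h3
  exact ((Sset π).orderIsoOfFin hκ).injective h4

/-- the pattern as a permutation -/
noncomputable def pattc : Perm (Fin k) :=
  Equiv.ofBijective _ (Finite.injective_iff_bijective.mp (pattFun_inj π hκ))

lemma pattc_apply (j : Fin k) : pattc π hκ j = pattFun π hκ j := rfl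

end PDVPaux
namespace PDVPaux
variable {n k t : ℕ} (p : Perm (Fin t)) (π : Perm (Fin (2*n))) (hκ : kap π = k)

lemma occ_eq : occPDVP p π = occClassical p (pattc π hκ) := by
  apply Nat.card_congr
  refine
    { toFun := fun F => ⟨fun a => ((Sset π).orderIsoOfFin hκ).symm
        ⟨half0 (F.1 a), ?_⟩, ?_, ?_⟩
      invFun := fun f => ⟨fun a => db ((((Sset π).orderIsoOfFin hκ) (f.1 a)) : Fin n), ?_, ?_, ?_, ?_⟩
      left_inv := ?_
      right_inv := ?_ }
  · -- membership
    rw [mem_Sset, db_half0 (F.2.2.1 a)]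
    exact F.2.2.2.1 a
  · -- increasing
    intro a b hab
    have h1 : F.1 a < F.1 b := F.2.1 a b hab
    have h2 : half0 (F.1 a) < half0 (F.1 b) := by
      rcases F.2.2.1 a with ⟨c, hc⟩; rcases F.2.2.1 b with ⟨d, hd⟩
      simp only [half0, Fin.lt_def] at h1 ⊢; omega
    exact (((Sset π).orderIsoOfFin hκ).symm.lt_iff_lt).mpr h2
  · -- pattern condition
    intro a b
    rw [pattc_apply, pattc_apply, pattFun_lt_iff]
    have e1 : ∀ c : Fin t, (((Sset π).orderIsoOfFin hκ)
        (((Sset π).orderIsoOfFin hκ).symm ⟨half0 (F.1 c), by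
          rw [mem_Sset, db_half0 (F.2.2.1 c)]; exact F.2.2.2.1 c⟩) : Fin n) = half0 (F.1 c) := by
      intro c; rw [OrderIso.apply_symm_apply]
    rw [e1 a, e1 b, db_half0 (F.2.2.1 a), db_half0 (F.2.2.1 b)]
    exact F.2.2.2.2 a b
  · -- increasing (inv)
    intro a b hab
    rw [db_lt_iff]
    exact_mod_cast (((Sset π).orderIsoOfFin hκ).lt_iff_lt).mpr (f.2.1 a b hab)
  · -- Even positions
    intro a; exact even_db _
  · -- Odd values
    intro a
    rw [pattFun_spec π hκ (f.1 a)]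
    exact odd_db1 _
  · -- pattern condition (inv)
    intro a b
    rw [← pattFun_lt_iff π hκ, ← pattc_apply, ← pattc_apply]
    exact f.2.2 a b
  · -- left_inv
    intro F
    apply Subtype.ext
    funext a
    simp only [OrderIso.apply_symm_apply]
    exact db_half0 (F.2.2.1 a)
  · -- right_inv
    intro f
    apply Subtype.ext
    funext a
    simp only [half0_db]
    rw [show (⟨(((Sset π).orderIsoOfFin hκ) (f.1 a) : Fin n), _⟩ :
        {x : Fin n // x ∈ Sset π}) = ((Sset π).orderIsoOfFin hκ) (f.1 a) from
      Subtype.ext rfl]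
    exact ((Sset π).orderIsoOfFin hκ).symm_apply_apply _

end PDVPaux
namespace PDVPaux
variable {n k : ℕ}

def UsetD (T : Finset (Fin n)) (g : Fin (n-k) ↪ Fin n) : Finset (Fin (2*n)) :=
  T.image db1 ∪ Finset.image (fun j => db (g j)) univ

def RsetD (T : Finset (Fin n)) (g : Fin (n-k) ↪ Fin n) : Finset (Fin (2*n)) := (UsetD T g)ᶜ

lemma card_UsetD (T : Finset (Fin n)) (g : Fin (n-k) ↪ Fin n) (hk : k ≤ n) (ht : T.card = k) :
    (UsetD T g).card = n := by
  rw [UsetD, Finset.card_union_of_disjoint, Finset.card_image_of_injective _ db1_inj,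
    Finset.card_image_of_injective _ (fun a b hab => g.injective (db_inj hab)), ht,
    Finset.card_univ, Fintype.card_fin]
  · omega
  · rw [Finset.disjoint_left]
    rintro a ha hb
    simp only [Finset.mem_image] at ha hb
    obtain ⟨y, _, rfl⟩ := ha
    obtain ⟨j, _, hj⟩ := hb
    exact db_ne_db1 _ _ hj

lemma card_RsetD (T : Finset (Fin n)) (g : Fin (n-k) ↪ Fin n) (hk : k ≤ n) (ht : T.card = k) :
    (RsetD T g).card = n := by
  rw [RsetD, Finset.card_compl, card_UsetD T g hk ht, Fintype.card_fin]
  omega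

lemma card_Scomp (S : Finset (Fin n)) (hs : S.card = k) : Sᶜ.card = n - k := by
  rw [Finset.card_compl, hs, Fintype.card_fin]

variable (S T : Finset (Fin n)) (g : Fin (n-k) ↪ Fin n) (hk : k ≤ n) (ht : T.card = k)
  (hs : S.card = k) (σ : Perm (Fin k)) (h : Perm (Fin n))

/-- the reconstruction function -/
noncomputable def psiFun : Fin (2*n) → Fin (2*n) := fun i =>
  if h0 : Odd (i : ℕ) then
    ((RsetD T g).orderIsoOfFin (card_RsetD T g hk ht)) (h (half1 i))
  else if hx : half0 i ∈ S then
    db1 (((T.orderIsoOfFin ht) (σ ((S.orderIsoOfFin hs).symm ⟨half0 i, hx⟩))) : Fin n)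
  else
    db ((g ((Sᶜ.orderIsoOfFin (card_Scomp S hs)).symm ⟨half0 i, Finset.mem_compl.mpr hx⟩)))
lemma psiFun_db_mem {x : Fin n} (hx : x ∈ S) :
    psiFun S T g hk ht hs σ h (db x) =
      db1 (((T.orderIsoOfFin ht) (σ ((S.orderIsoOfFin hs).symm ⟨x, hx⟩))) : Fin n) := by
  rw [psiFun, dif_neg (by simpa using (Nat.not_odd_iff_even.mpr (even_db x)))]
  rw [dif_pos (by rwa [half0_db])]
  simp only [half0_db]

lemma psiFun_db_not {x : Fin n} (hx : x ∉ S) :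
    psiFun S T g hk ht hs σ h (db x) =
      db ((g ((Sᶜ.orderIsoOfFin (card_Scomp S hs)).symm ⟨x, Finset.mem_compl.mpr hx⟩))) := by
  rw [psiFun, dif_neg (by simpa using (Nat.not_odd_iff_even.mpr (even_db x)))]
  rw [dif_neg (by rwa [half0_db])]
  simp only [half0_db]

lemma psiFun_db1 (j : Fin n) :
    psiFun S T g hk ht hs σ h (db1 j) =
      ((RsetD T g).orderIsoOfFin (card_RsetD T g hk ht)) (h j) := by
  rw [psiFun, dif_pos (odd_db1 j), half1_db1]

lemma psiFun_inj : Function.Injective (psiFun S T g hk ht hs σ h) := by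
  have memU1 : ∀ y : Fin n, y ∈ T → db1 y ∈ UsetD T g := by
    intro y hy; exact Finset.mem_union_left _ (Finset.mem_image_of_mem _ hy)
  have memU2 : ∀ j, db (g j) ∈ UsetD T g := by
    intro j; exact Finset.mem_union_right _ (Finset.mem_image_of_mem _ (Finset.mem_univ j))
  have memR : ∀ v, (((RsetD T g).orderIsoOfFin (card_RsetD T g hk ht)) v : Fin (2*n)) ∉
      UsetD T g := by
    intro v
    have := (((RsetD T g).orderIsoOfFin (card_RsetD T g hk ht)) v).2
    simp only [RsetD, Finset.mem_compl] at this
    exact this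
  intro i i' hii
  rcases cases_db i with ⟨x, rfl⟩ | ⟨x, rfl⟩ <;> rcases cases_db i' with ⟨x', rfl⟩ | ⟨x', rfl⟩
  · by_cases hx : x ∈ S <;> by_cases hx' : x' ∈ S
    · rw [psiFun_db_mem S T g hk ht hs σ h hx, psiFun_db_mem S T g hk ht hs σ h hx'] at hii
      have h1 := db1_inj hii
      have h2 := (T.orderIsoOfFin ht).injective (Subtype.ext h1)
      have h3 := (S.orderIsoOfFin hs).symm.injective (σ.injective h2)
      have : x = x' := congrArg Subtype.val h3
      rw [this]
    · rw [psiFun_db_mem S T g hk ht hs σ h hx, psiFun_db_not S T g hk ht hs σ h hx'] at hii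
      exact absurd hii.symm (db_ne_db1 _ _)
    · rw [psiFun_db_not S T g hk ht hs σ h hx, psiFun_db_mem S T g hk ht hs σ h hx'] at hii
      exact absurd hii (db_ne_db1 _ _)
    · rw [psiFun_db_not S T g hk ht hs σ h hx, psiFun_db_not S T g hk ht hs σ h hx'] at hii
      have h1 := g.injective (db_inj hii)
      have h2 := (Sᶜ.orderIsoOfFin (card_Scomp S hs)).symm.injective h1
      have : x = x' := congrArg Subtype.val h2
      rw [this]
  · exfalso
    rw [psiFun_db1] at hii
    by_cases hx : x ∈ S
    · rw [psiFun_db_mem S T g hk ht hs σ h hx] at hii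
      exact memR _ (hii ▸ memU1 _ ((T.orderIsoOfFin ht) _).2)
    · rw [psiFun_db_not S T g hk ht hs σ h hx] at hii
      exact memR _ (hii ▸ memU2 _)
  · exfalso
    rw [psiFun_db1] at hii
    by_cases hx : x' ∈ S
    · rw [psiFun_db_mem S T g hk ht hs σ h hx] at hii
      exact memR _ (hii.symm ▸ memU1 _ ((T.orderIsoOfFin ht) _).2)
    · rw [psiFun_db_not S T g hk ht hs σ h hx] at hii
      exact memR _ (hii.symm ▸ memU2 _)
  · rw [psiFun_db1, psiFun_db1] at hii
    have h1 := ((RsetD T g).orderIsoOfFin (card_RsetD T g hk ht)).injective (Subtype.ext hii)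
    exact congrArg db1 (h.injective h1)

/-- the reconstructed permutation -/
noncomputable def Psi : Perm (Fin (2*n)) :=
  Equiv.ofBijective _ (Finite.injective_iff_bijective.mp (psiFun_inj S T g hk ht hs σ h))

lemma Psi_apply (i : Fin (2*n)) : Psi S T g hk ht hs σ h i = psiFun S T g hk ht hs σ h i := rfl

end PDVPaux
namespace PDVPaux
variable {n k : ℕ}

lemma orderIsoOfFin_congr {s t : Finset (Fin n)} (hst : s = t) {k : ℕ}
    (hs : s.card = k) (ht : t.card = k) (j : Fin k) :
    ((s.orderIsoOfFin hs j) : Fin n) = ((t.orderIsoOfFin ht j) : Fin n) := by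
  subst hst; rfl

lemma orderIsoOfFin_symm_congr {s t : Finset (Fin n)} (hst : s = t) {k : ℕ}
    (hs : s.card = k) (ht : t.card = k) (v : Fin n) (hv : v ∈ s) (hv' : v ∈ t) :
    (s.orderIsoOfFin hs).symm ⟨v, hv⟩ = (t.orderIsoOfFin ht).symm ⟨v, hv'⟩ := by
  subst hst; rfl

lemma orderIsoOfFin_congr2 {s t : Finset (Fin (2*n))} (hst : s = t) {k : ℕ}
    (hs : s.card = k) (ht : t.card = k) (j : Fin k) :
    ((s.orderIsoOfFin hs j) : Fin (2*n)) = ((t.orderIsoOfFin ht j) : Fin (2*n)) := by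
  subst hst; rfl

lemma orderIsoOfFin_symm_congr2 {s t : Finset (Fin (2*n))} (hst : s = t) {k : ℕ}
    (hs : s.card = k) (ht : t.card = k) (v : Fin (2*n)) (hv : v ∈ s) (hv' : v ∈ t) :
    (s.orderIsoOfFin hs).symm ⟨v, hv⟩ = (t.orderIsoOfFin ht).symm ⟨v, hv'⟩ := by
  subst hst; rfl

variable (S T : Finset (Fin n)) (g : Fin (n-k) ↪ Fin n) (hk : k ≤ n) (ht : T.card = k)
  (hs : S.card = k) (σ : Perm (Fin k)) (h : Perm (Fin n))

lemma Sset_Psi : Sset (Psi S T g hk ht hs σ h) = S := by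
  ext x
  rw [mem_Sset, Psi_apply]
  by_cases hx : x ∈ S
  · rw [psiFun_db_mem S T g hk ht hs σ h hx]
    simp only [hx, iff_true]
    exact odd_db1 _
  · rw [psiFun_db_not S T g hk ht hs σ h hx]
    simp only [hx, iff_false]
    exact (Nat.not_odd_iff_even.mpr (even_db _))

lemma kap_Psi : kap (Psi S T g hk ht hs σ h) = k := by
  rw [kap, Sset_Psi]; exact hs

lemma Tset_Psi : Tset (Psi S T g hk ht hs σ h) = T := by
  ext y
  rw [mem_Tset]
  constructor
  · intro hy
    set P := Psi S T g hk ht hs σ h with hP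
    set i := P.symm (db1 y) with hi
    have hPi : P i = db1 y := by rw [hi, Equiv.apply_symm_apply]
    rcases cases_db i with ⟨x, hx⟩ | ⟨x, hx⟩
    · rw [hx] at hPi
      by_cases hxS : x ∈ S
      · rw [Psi_apply, psiFun_db_mem S T g hk ht hs σ h hxS] at hPi
        have := db1_inj hPi
        rw [← this]
        exact ((T.orderIsoOfFin ht) _).2
      · rw [Psi_apply, psiFun_db_not S T g hk ht hs σ h hxS] at hPi
        exact absurd hPi (db_ne_db1 _ _)
    · exfalso
      rw [hx] at hy
      rcases odd_db1 x with ⟨c, hc⟩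
      rcases hy with ⟨d, hd⟩
      omega
  · intro hy
    set j := (T.orderIsoOfFin ht).symm ⟨y, hy⟩ with hj
    set x := ((S.orderIsoOfFin hs) (σ.symm j) : Fin n) with hx
    have hxS : x ∈ S := ((S.orderIsoOfFin hs) (σ.symm j)).2
    have : Psi S T g hk ht hs σ h (db x) = db1 y := by
      rw [Psi_apply, psiFun_db_mem S T g hk ht hs σ h hxS]
      have e1 : (⟨x, hxS⟩ : {a // a ∈ S}) = (S.orderIsoOfFin hs) (σ.symm j) := Subtype.ext rfl
      rw [e1, OrderIso.symm_apply_apply, Equiv.apply_symm_apply, hj,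
        OrderIso.apply_symm_apply]
    rw [← this, Equiv.symm_apply_apply]
    exact even_db x

lemma pattc_Psi (hκ : kap (Psi S T g hk ht hs σ h) = k) :
    pattc (Psi S T g hk ht hs σ h) hκ = σ := by
  set P := Psi S T g hk ht hs σ h with hP
  apply Equiv.ext
  intro j
  rw [pattc_apply]
  -- both sides characterized by P (db (SsetIso j)) = db1 (TsetIso (· j))
  have spec := pattFun_spec P hκ j
  have e1 : ((Sset P).orderIsoOfFin hκ j : Fin n) = ((S.orderIsoOfFin hs) j : Fin n) :=
    orderIsoOfFin_congr (Sset_Psi S T g hk ht hs σ h) _ _ j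
  have hmem : ((S.orderIsoOfFin hs) j : Fin n) ∈ S := ((S.orderIsoOfFin hs) j).2
  have e2 : P (db ((Sset P).orderIsoOfFin hκ j : Fin n)) =
      db1 ((T.orderIsoOfFin ht) (σ j) : Fin n) := by
    rw [e1, Psi_apply, psiFun_db_mem S T g hk ht hs σ h hmem]
    congr 2
    rw [show (⟨((S.orderIsoOfFin hs) j : Fin n), hmem⟩ : {a // a ∈ S}) =
      (S.orderIsoOfFin hs) j from Subtype.ext rfl, OrderIso.symm_apply_apply]
  rw [e2] at spec
  have h3 := db1_inj spec
  have e3 : ((Tset P).orderIsoOfFin ((card_Tset P).trans hκ) (pattFun P hκ j) : Fin n) =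
      ((T.orderIsoOfFin ht) (pattFun P hκ j) : Fin n) :=
    orderIsoOfFin_congr (Tset_Psi S T g hk ht hs σ h) _ _ _
  rw [e3] at h3
  exact ((T.orderIsoOfFin ht).injective (Subtype.ext h3.symm))

end PDVPaux
namespace PDVPaux
variable {n k : ℕ}

variable (π : Perm (Fin (2*n))) (hκ : kap π = k)

lemma not_mem_Sset_even {x : Fin n} (hx : x ∉ Sset π) : Even ((π (db x) : ℕ)) := by
  rw [mem_Sset] at hx
  exact Nat.not_odd_iff_even.mp hx

/-- the g-component extracted from π -/
noncomputable def gPhi : Fin (n-k) ↪ Fin n where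
  toFun := fun j => half0 (π (db (((Sset π)ᶜ.orderIsoOfFin (card_Scomp _ hκ)) j : Fin n)))
  inj' := by
    intro a b hab
    have ha := ((Sset π)ᶜ.orderIsoOfFin (card_Scomp _ hκ) a).2
    have hb := ((Sset π)ᶜ.orderIsoOfFin (card_Scomp _ hκ) b).2
    rw [Finset.mem_compl] at ha hb
    have h1 := congrArg db hab
    rw [db_half0 (not_mem_Sset_even π ha), db_half0 (not_mem_Sset_even π hb)] at h1
    have h2 := db_inj (π.injective h1)
    exact ((Sset π)ᶜ.orderIsoOfFin (card_Scomp _ hκ)).injective (Subtype.ext h2)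

lemma gPhi_spec (j : Fin (n-k)) :
    db (gPhi π hκ j) = π (db (((Sset π)ᶜ.orderIsoOfFin (card_Scomp _ hκ)) j : Fin n)) := by
  have ha := ((Sset π)ᶜ.orderIsoOfFin (card_Scomp _ hκ) j).2
  rw [Finset.mem_compl] at ha
  exact db_half0 (not_mem_Sset_even π ha)

lemma pi_db1_mem_RsetD (j : Fin n) :
    π (db1 j) ∈ RsetD (Tset π) (gPhi π hκ) := by
  rw [RsetD, Finset.mem_compl, UsetD, Finset.mem_union]
  rintro (hmem | hmem)
  · rw [Finset.mem_image] at hmem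
    obtain ⟨y, hy, hy2⟩ := hmem
    rw [mem_Tset] at hy
    rw [hy2, Equiv.symm_apply_apply] at hy
    rcases odd_db1 j with ⟨c, hc⟩
    rcases hy with ⟨d, hd⟩
    omega
  · rw [Finset.mem_image] at hmem
    obtain ⟨j', _, hj'⟩ := hmem
    rw [gPhi_spec] at hj'
    have := π.injective hj'
    exact db_ne_db1 _ _ this

/-- the h-component extracted from π -/
noncomputable def hPhiFun : Fin n → Fin n := fun j =>
  ((RsetD (Tset π) (gPhi π hκ)).orderIsoOfFin
    (card_RsetD _ _ (hκ ▸ kap_le π) ((card_Tset π).trans hκ))).symm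
    ⟨π (db1 j), pi_db1_mem_RsetD π hκ j⟩

lemma hPhiFun_inj : Function.Injective (hPhiFun π hκ) := by
  intro a b hab
  have h1 := ((RsetD (Tset π) (gPhi π hκ)).orderIsoOfFin
    (card_RsetD _ _ (hκ ▸ kap_le π) ((card_Tset π).trans hκ))).symm.injective hab
  have h2 : π (db1 a) = π (db1 b) := congrArg Subtype.val h1
  exact db1_inj (π.injective h2)

noncomputable def hPhi : Perm (Fin n) :=
  Equiv.ofBijective _ (Finite.injective_iff_bijective.mp (hPhiFun_inj π hκ))

lemma hPhi_apply (j : Fin n) : hPhi π hκ j = hPhiFun π hκ j := rfl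

/-- Round trip 2: reconstructing π from its components gives π back -/
lemma Psi_Phi :
    Psi (Sset π) (Tset π) (gPhi π hκ) (hκ ▸ kap_le π) ((card_Tset π).trans hκ) hκ
      (pattc π hκ) (hPhi π hκ) = π := by
  apply Equiv.ext
  intro i
  rcases cases_db i with ⟨x, rfl⟩ | ⟨j, rfl⟩
  · by_cases hx : x ∈ Sset π
    · erw [Psi_apply, psiFun_db_mem _ _ _ _ _ _ _ _ hx]
      have spec := pattFun_spec π hκ (((Sset π).orderIsoOfFin hκ).symm ⟨x, hx⟩)
      rw [OrderIso.apply_symm_apply] at spec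
      rw [spec]
      rfl
    · erw [Psi_apply, psiFun_db_not _ _ _ _ _ _ _ _ hx]
      rw [gPhi_spec]
      congr 2
      rw [OrderIso.apply_symm_apply]
  · erw [Psi_apply, psiFun_db1, hPhi_apply, hPhiFun, OrderIso.apply_symm_apply]

end PDVPaux
namespace PDVPaux
variable {n k : ℕ}

variable (S T : Finset (Fin n)) (g : Fin (n-k) ↪ Fin n) (hk : k ≤ n) (ht : T.card = k)
  (hs : S.card = k) (σ : Perm (Fin k)) (h : Perm (Fin n))

lemma gPhi_Psi (hκ : kap (Psi S T g hk ht hs σ h) = k) :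
    gPhi (Psi S T g hk ht hs σ h) hκ = g := by
  set P := Psi S T g hk ht hs σ h with hP
  apply Function.Embedding.ext
  intro j
  show half0 (P (db (((Sset P)ᶜ.orderIsoOfFin (card_Scomp _ hκ)) j : Fin n))) = g j
  have hcompl : (Sset P)ᶜ = Sᶜ := by rw [Sset_Psi]
  have e1 : (((Sset P)ᶜ.orderIsoOfFin (card_Scomp _ hκ)) j : Fin n) =
      ((Sᶜ.orderIsoOfFin (card_Scomp S hs)) j : Fin n) :=
    orderIsoOfFin_congr hcompl _ _ j
  rw [e1]
  have hmem := ((Sᶜ.orderIsoOfFin (card_Scomp S hs)) j).2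
  have hx : ((Sᶜ.orderIsoOfFin (card_Scomp S hs)) j : Fin n) ∉ S := Finset.mem_compl.mp hmem
  rw [hP, Psi_apply, psiFun_db_not S T g hk ht hs σ h hx]
  rw [show (⟨((Sᶜ.orderIsoOfFin (card_Scomp S hs)) j : Fin n), Finset.mem_compl.mpr hx⟩ :
      {a // a ∈ Sᶜ}) = (Sᶜ.orderIsoOfFin (card_Scomp S hs)) j from Subtype.ext rfl,
    OrderIso.symm_apply_apply, half0_db]

lemma hPhi_Psi (hκ : kap (Psi S T g hk ht hs σ h) = k) :
    hPhi (Psi S T g hk ht hs σ h) hκ = h := by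
  set P := Psi S T g hk ht hs σ h with hP
  apply Equiv.ext
  intro j
  rw [hPhi_apply, hPhiFun]
  have hR : RsetD (Tset P) (gPhi P hκ) = RsetD T g := by
    rw [Tset_Psi, gPhi_Psi]
  have e2 : P (db1 j) = ((RsetD T g).orderIsoOfFin (card_RsetD T g hk ht)) (h j) := by
    rw [hP, Psi_apply, psiFun_db1]
  have hmem' : P (db1 j) ∈ RsetD T g := hR ▸ pi_db1_mem_RsetD P hκ j
  rw [orderIsoOfFin_symm_congr2 hR _ (card_RsetD T g hk ht) _ (pi_db1_mem_RsetD P hκ j) hmem']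
  have e3 : (⟨P (db1 j), hmem'⟩ : {x // x ∈ RsetD T g}) =
      ((RsetD T g).orderIsoOfFin (card_RsetD T g hk ht)) (h j) := Subtype.ext e2
  exact (congrArg (⇑((RsetD T g).orderIsoOfFin (card_RsetD T g hk ht)).symm) e3).trans
    (((RsetD T g).orderIsoOfFin (card_RsetD T g hk ht)).symm_apply_apply (h j))

end PDVPaux
namespace PDVPaux
variable {n k t : ℕ}

/-- The key equivalence for a fixed k -/
noncomputable def mainEquiv (p : Perm (Fin t)) (m : ℕ) (hk : k ≤ n) :
    {π : Perm (Fin (2*n)) // occPDVP p π = m ∧ kap π = k} ≃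
      ({σ : Perm (Fin k) // occClassical p σ = m} ×
        ({s : Finset (Fin n) // s.card = k} × {s : Finset (Fin n) // s.card = k} ×
          (Fin (n-k) ↪ Fin n) × Perm (Fin n))) where
  toFun := fun x =>
    (⟨pattc x.1 x.2.2, by rw [← occ_eq p x.1 x.2.2]; exact x.2.1⟩,
     ⟨Sset x.1, x.2.2⟩, ⟨Tset x.1, (card_Tset x.1).trans x.2.2⟩,
     gPhi x.1 x.2.2, hPhi x.1 x.2.2)
  invFun := fun y =>
    ⟨Psi y.2.1.1 y.2.2.1.1 y.2.2.2.1 hk y.2.2.1.2 y.2.1.2 y.1.1 y.2.2.2.2, by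
      have hκ := kap_Psi y.2.1.1 y.2.2.1.1 y.2.2.2.1 hk y.2.2.1.2 y.2.1.2 y.1.1 y.2.2.2.2
      refine ⟨?_, hκ⟩
      rw [occ_eq p _ hκ, pattc_Psi y.2.1.1 y.2.2.1.1 y.2.2.2.1 hk y.2.2.1.2 y.2.1.2 y.1.1
        y.2.2.2.2 hκ]
      exact y.1.2⟩
  left_inv := fun x => Subtype.ext (Psi_Phi x.1 x.2.2)
  right_inv := fun y => by
    obtain ⟨⟨σ, hσ⟩, ⟨S, hs⟩, ⟨T, ht⟩, g, h⟩ := y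
    refine Prod.ext (Subtype.ext ?_) (Prod.ext (Subtype.ext ?_) (Prod.ext (Subtype.ext ?_)
      (Prod.ext ?_ ?_)))
    · exact pattc_Psi S T g hk ht hs σ h (kap_Psi S T g hk ht hs σ h)
    · exact Sset_Psi S T g hk ht hs σ h
    · exact Tset_Psi S T g hk ht hs σ h
    · exact gPhi_Psi S T g hk ht hs σ h (kap_Psi S T g hk ht hs σ h)
    · exact hPhi_Psi S T g hk ht hs σ h (kap_Psi S T g hk ht hs σ h)

open Classical in
lemma card_partition {α : Type*} [Fintype α] (P : α → Prop) (f : α → ℕ) {N : ℕ}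
    (hf : ∀ a, f a ≤ N) :
    Nat.card {a // P a} = ∑ j ∈ Finset.range (N+1), Nat.card {a // P a ∧ f a = j} := by
  simp only [Nat.card_eq_fintype_card, Fintype.card_subtype]
  rw [Finset.card_eq_sum_card_fiberwise (f := f) (t := Finset.range (N+1))
    (fun x _ => Finset.mem_range.mpr (Nat.lt_succ_of_le (hf x)))]
  refine Finset.sum_congr rfl fun j _ => ?_
  congr 1
  ext a
  simp only [Finset.mem_filter, Finset.mem_univ, true_and, and_assoc]

lemma card_finsets (n k : ℕ) : Nat.card {s : Finset (Fin n) // s.card = k} = n.choose k := by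
  rw [Nat.card_eq_fintype_card, Fintype.card_subtype]
  have : Finset.univ.filter (fun s : Finset (Fin n) => s.card = k) =
      Finset.powersetCard k Finset.univ := by
    ext s
    simp [Finset.mem_powersetCard, Finset.subset_univ, eq_comm]
  rw [this, Finset.card_powersetCard, Finset.card_univ, Fintype.card_fin]

lemma card_perms (n : ℕ) : Nat.card (Perm (Fin n)) = n.factorial := by
  rw [Nat.card_eq_fintype_card, Fintype.card_perm, Fintype.card_fin]

lemma card_embs (a b : ℕ) : Nat.card (Fin a ↪ Fin b) = b.descFactorial a := by
  rw [Nat.card_eq_fintype_card, Fintype.card_embedding_eq, Fintype.card_fin, Fintype.card_fin]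

end PDVPaux

theorem stmt1 (t : ℕ) (p : Equiv.Perm (Fin t)) (n m : ℕ) :
    Nat.card {π : Equiv.Perm (Fin (2 * n)) // occPDVP p π = m} =
    ∑ k ∈ Finset.range (n + 1),
      Nat.factorial n * Nat.factorial (n - k) * (Nat.choose n k) ^ 3 *
        Nat.card {σ : Equiv.Perm (Fin k) // occClassical p σ = m} := by
  rw [PDVPaux.card_partition (fun π => occPDVP p π = m) PDVPaux.kap PDVPaux.kap_le]
  refine Finset.sum_congr rfl fun k hk => ?_
  have hkn : k ≤ n := Nat.lt_succ_iff.mp (Finset.mem_range.mp hk)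
  rw [Nat.card_congr (PDVPaux.mainEquiv p m hkn)]
  rw [Nat.card_prod, Nat.card_prod, Nat.card_prod, Nat.card_prod]
  rw [PDVPaux.card_finsets, PDVPaux.card_perms, PDVPaux.card_embs]
  rw [Nat.descFactorial_eq_factorial_mul_choose, Nat.choose_symm hkn]
  ring
end

section
/- For k ≥ 2 and n ≥ k+1, the number of permutations of length n that simultaneously avoid the consecutive patterns 231 and 132 and avoid any pair of positions i, i+k with π_{i+k} = π_i + 1 equals 3·2^{n−3}. -/
/-- `π` avoids the consecutive patterns 231 and 132. -/
def AvoidsCons231and132 {n : ℕ} (π : Equiv.Perm (Fin n)) : Prop :=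
  ∀ i j l : Fin n, (j : ℕ) = (i : ℕ) + 1 → (l : ℕ) = (i : ℕ) + 2 →
    ¬ (π l < π i ∧ π i < π j) ∧ ¬ (π i < π l ∧ π l < π j)

open Finset

variable {n : ℕ}

/-- position of value `v` under π, as a natural number -/
def posv [NeZero n] (π : Equiv.Perm (Fin n)) (v : Fin n) : ℕ := (π.symm v : ℕ)

/-- position of the value 0 -/
def mval [NeZero n] (π : Equiv.Perm (Fin n)) : ℕ := posv π 0

def Sset [NeZero n] (π : Equiv.Perm (Fin n)) : Finset (Fin n) :=
  Finset.univ.filter fun v => posv π v < mval π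

def Tset [NeZero n] (π : Equiv.Perm (Fin n)) : Finset (Fin n) :=
  Finset.univ.filter fun v => mval π < posv π v

def Valley [NeZero n] (π : Equiv.Perm (Fin n)) : Prop :=
  ∀ i : ℕ, (h : i + 1 < n) →
    (i + 1 ≤ mval π → π ⟨i+1, h⟩ < π ⟨i, Nat.lt_of_succ_lt h⟩) ∧
    (mval π < i + 1 → π ⟨i, Nat.lt_of_succ_lt h⟩ < π ⟨i+1, h⟩)

lemma card_filter_val (l u : ℕ) (hu : u ≤ n) :
    ((univ : Finset (Fin n)).filter fun j => l ≤ j.val ∧ j.val < u).card = u - l := by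
  rw [← Nat.card_Ico l u]
  apply Finset.card_nbij (fun j => j.val)
  · intro a ha; simp only [mem_coe, mem_filter, mem_univ, true_and] at ha; simp [Finset.mem_Ico, ha]
  · intro a _ b _ h; exact Fin.val_injective h
  · intro x hx
    simp only [Finset.coe_Ico, Set.mem_Ico] at hx
    exact ⟨⟨x, lt_of_lt_of_le hx.2 hu⟩, by simp [hx.1, hx.2], rfl⟩

lemma count_inj (A : Finset (Fin n)) {a b : Fin n} (ha : a ∈ A) (hb : b ∈ A)
    (h : (A.filter (a < ·)).card = (A.filter (b < ·)).card) : a = b := by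
  rcases lt_trichotomy a b with hab | hab | hab
  · exfalso
    have hss : A.filter (b < ·) ⊂ A.filter (a < ·) := by
      constructor
      · intro x hx; simp only [mem_filter] at hx ⊢; exact ⟨hx.1, lt_trans hab hx.2⟩
      · intro hsub
        have : b ∈ A.filter (b < ·) := hsub (by simp [mem_filter, hb, hab])
        simp [mem_filter] at this
    exact absurd h (by have := Finset.card_lt_card hss; omega)
  · exact hab
  · exfalso
    have hss : A.filter (a < ·) ⊂ A.filter (b < ·) := by
      constructor
      · intro x hx; simp only [mem_filter] at hx ⊢; exact ⟨hx.1, lt_trans hab hx.2⟩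
      · intro hsub
        have : a ∈ A.filter (a < ·) := hsub (by simp [mem_filter, ha, hab])
        simp [mem_filter] at this
    exact absurd h (by have := Finset.card_lt_card hss; omega)

lemma count_inj' (A : Finset (Fin n)) {a b : Fin n} (ha : a ∈ A) (hb : b ∈ A)
    (h : (A.filter (· < a)).card = (A.filter (· < b)).card) : a = b := by
  rcases lt_trichotomy a b with hab | hab | hab
  · exfalso
    have hss : A.filter (· < a) ⊂ A.filter (· < b) := by
      constructor
      · intro x hx; simp only [mem_filter] at hx ⊢; exact ⟨hx.1, lt_trans hx.2 hab⟩
      · intro hsub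
        have : a ∈ A.filter (· < a) := hsub (by simp [mem_filter, ha, hab])
        simp [mem_filter] at this
    exact absurd h (by have := Finset.card_lt_card hss; omega)
  · exact hab
  · exfalso
    have hss : A.filter (· < b) ⊂ A.filter (· < a) := by
      constructor
      · intro x hx; simp only [mem_filter] at hx ⊢; exact ⟨hx.1, lt_trans hx.2 hab⟩
      · intro hsub
        have : b ∈ A.filter (· < b) := hsub (by simp [mem_filter, hb, hab])
        simp [mem_filter] at this
    exact absurd h (by have := Finset.card_lt_card hss; omega)

section
variable [NeZero n] {π : Equiv.Perm (Fin n)}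

lemma mval_lt : mval π < n := (π.symm 0).isLt

lemma pi_mval : π ⟨mval π, mval_lt⟩ = 0 := by
  have : (⟨mval π, mval_lt⟩ : Fin n) = π.symm 0 := by
    apply Fin.ext; rfl
  rw [this, Equiv.apply_symm_apply]

lemma posv_apply (i : ℕ) (h : i < n) : posv π (π ⟨i, h⟩) = i := by
  simp [posv]

lemma posv_eq_mval_iff {v : Fin n} : posv π v = mval π ↔ v = 0 := by
  constructor
  · intro h
    have : π.symm v = π.symm 0 := Fin.ext h
    exact π.symm.injective this
  · rintro rfl; rfl

lemma mem_Sset {v : Fin n} : v ∈ Sset π ↔ posv π v < mval π := by simp [Sset]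

lemma mem_Tset {v : Fin n} : v ∈ Tset π ↔ mval π < posv π v := by simp [Tset]

lemma mem_Tset_iff {v : Fin n} : v ∈ Tset π ↔ v ∉ Sset π ∧ v ≠ 0 := by
  rw [mem_Sset, mem_Tset]
  constructor
  · intro h
    refine ⟨by omega, ?_⟩
    intro hv
    rw [← posv_eq_mval_iff (π := π)] at hv
    omega
  · rintro ⟨h1, h2⟩
    have h3 : posv π v ≠ mval π := fun hh => h2 (posv_eq_mval_iff.mp hh)
    omega

lemma valley_anti (hV : Valley π) :
    ∀ d i : ℕ, (h : i + 1 + d ≤ mval π) →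
      π ⟨i + 1 + d, lt_of_le_of_lt h mval_lt⟩ < π ⟨i, by have := mval_lt (π := π); omega⟩ := by
  intro d
  induction d with
  | zero => intro i h; exact (hV i (by have := mval_lt (π := π); omega)).1 (by omega)
  | succ d ih =>
    intro i h
    have h1 : i + 1 + d ≤ mval π := by omega
    refine lt_trans ?_ (ih i h1)
    have := (hV (i + 1 + d) (by have := mval_lt (π := π); omega)).1 (by omega)
    convert this using 2 <;> rfl

lemma valley_anti' (hV : Valley π) {i j : ℕ} (hij : i < j) (hj : j ≤ mval π) :
    π ⟨j, lt_of_le_of_lt hj mval_lt⟩ < π ⟨i, by have := mval_lt (π := π); omega⟩ := by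
  obtain ⟨d, rfl⟩ : ∃ d, j = i + 1 + d := ⟨j - i - 1, by omega⟩
  exact valley_anti hV d i hj

lemma valley_mono (hV : Valley π) :
    ∀ d i : ℕ, mval π ≤ i → (h : i + 1 + d < n) →
      π ⟨i, by omega⟩ < π ⟨i + 1 + d, h⟩ := by
  intro d
  induction d with
  | zero => intro i hm h; exact (hV i h).2 (by omega)
  | succ d ih =>
    intro i hm h
    refine lt_trans (ih i hm (by omega)) ?_
    have := (hV (i + 1 + d) h).2 (by omega)
    convert this using 2 <;> rfl

lemma valley_mono' (hV : Valley π) {i j : ℕ} (hm : mval π ≤ i) (hij : i < j) (hj : j < n) :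
    π ⟨i, by omega⟩ < π ⟨j, hj⟩ := by
  obtain ⟨d, rfl⟩ : ∃ d, j = i + 1 + d := ⟨j - i - 1, by omega⟩
  exact valley_mono hV d i hm hj

lemma count_left (hV : Valley π) {i : ℕ} (hi : i < mval π) :
    π ⟨i, lt_trans hi mval_lt⟩ ∈ Sset π ∧
      ((Sset π).filter (fun s => π ⟨i, lt_trans hi mval_lt⟩ < s)).card = i := by
  have hin : i < n := lt_trans hi mval_lt
  set x := π ⟨i, hin⟩ with hx
  have hxS : x ∈ Sset π := by rw [mem_Sset, hx, posv_apply]; exact hi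
  refine ⟨hxS, ?_⟩
  have himg : (Sset π).filter (fun s => x < s)
      = Finset.image π ((univ : Finset (Fin n)).filter fun j => j.val < i) := by
    ext s
    simp only [mem_filter, mem_image, mem_univ, true_and, mem_Sset]
    constructor
    · rintro ⟨hsS, hxs⟩
      refine ⟨π.symm s, ?_, Equiv.apply_symm_apply _ _⟩
      by_contra hc
      push_neg at hc
      rcases eq_or_lt_of_le hc with hq | hq
      · apply absurd hxs
        have : π.symm s = ⟨i, hin⟩ := Fin.ext hq.symm
        rw [← Equiv.apply_symm_apply π s, this, ← hx]
        exact lt_irrefl x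
      · have hsm : (π.symm s : ℕ) < mval π := hsS
        have := valley_anti' hV hq (le_of_lt hsm)
        rw [show (⟨(π.symm s : ℕ), _⟩ : Fin n) = π.symm s from Fin.ext rfl,
          Equiv.apply_symm_apply] at this
        exact absurd hxs (not_lt.mpr (le_of_lt this))
    · rintro ⟨j, hj, rfl⟩
      constructor
      · rw [show (π j : Fin n) = π ⟨(j : ℕ), j.isLt⟩ from by congr 1]
        rw [posv_apply]; omega
      · have := valley_anti' hV hj (le_of_lt hi)
        rw [show (⟨(j : ℕ), _⟩ : Fin n) = j from Fin.ext rfl] at this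
        exact this
  rw [himg, Finset.card_image_of_injective _ π.injective]
  have heq : ((univ : Finset (Fin n)).filter fun j : Fin n => (j : ℕ) < i)
      = ((univ : Finset (Fin n)).filter fun j : Fin n => 0 ≤ (j : ℕ) ∧ (j : ℕ) < i) := by
    apply filter_congr; intro j _; simp
  rw [heq, card_filter_val 0 i (by omega)]
  omega

lemma count_right (hV : Valley π) {i : ℕ} (hi : mval π < i) (hin : i < n) :
    π ⟨i, hin⟩ ∈ Tset π ∧
      ((Tset π).filter (fun u => u < π ⟨i, hin⟩)).card = i - mval π - 1 := by
  set x := π ⟨i, hin⟩ with hx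
  have hxT : x ∈ Tset π := by rw [mem_Tset, hx, posv_apply]; exact hi
  refine ⟨hxT, ?_⟩
  have himg : (Tset π).filter (fun u => u < x)
      = Finset.image π ((univ : Finset (Fin n)).filter fun j => mval π < j.val ∧ j.val < i) := by
    ext s
    simp only [mem_filter, mem_image, mem_univ, true_and, mem_Tset]
    constructor
    · rintro ⟨hsT, hxs⟩
      refine ⟨π.symm s, ⟨hsT, ?_⟩, Equiv.apply_symm_apply _ _⟩
      by_contra hc
      push_neg at hc
      rcases eq_or_lt_of_le hc with hq | hq
      · apply absurd hxs
        have : π.symm s = ⟨i, hin⟩ := Fin.ext hq.symm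
        rw [← Equiv.apply_symm_apply π s, this, ← hx]
        exact lt_irrefl x
      · have := valley_mono' hV (le_of_lt hi) hq (π.symm s).isLt
        rw [show (⟨(π.symm s : ℕ), _⟩ : Fin n) = π.symm s from Fin.ext rfl,
          Equiv.apply_symm_apply] at this
        exact absurd hxs (not_lt.mpr (le_of_lt this))
    · rintro ⟨j, hj, rfl⟩
      constructor
      · rw [show (π j : Fin n) = π ⟨(j : ℕ), j.isLt⟩ from by congr 1]
        rw [posv_apply]; exact hj.1
      · have := valley_mono' hV (le_of_lt hj.1) hj.2 hin
        rw [show (⟨(j : ℕ), _⟩ : Fin n) = j from Fin.ext rfl] at this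
        exact this
  rw [himg, Finset.card_image_of_injective _ π.injective]
  have heq : ((univ : Finset (Fin n)).filter fun j : Fin n => mval π < (j : ℕ) ∧ (j : ℕ) < i)
      = ((univ : Finset (Fin n)).filter fun j : Fin n => mval π + 1 ≤ (j : ℕ) ∧ (j : ℕ) < i) := by
    apply filter_congr; intro j _; simp
  rw [heq, card_filter_val (mval π + 1) i (by omega)]
  omega

end

section
variable [NeZero n] {π : Equiv.Perm (Fin n)}

lemma posv_pi (p : Fin n) : posv π (π p) = (p : ℕ) := by simp [posv]

lemma card_filter_val_lt (u : ℕ) (hu : u ≤ n) :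
    ((univ : Finset (Fin n)).filter fun j : Fin n => (j : ℕ) < u).card = u := by
  have heq : ((univ : Finset (Fin n)).filter fun j : Fin n => (j : ℕ) < u)
      = ((univ : Finset (Fin n)).filter fun j : Fin n => 0 ≤ (j : ℕ) ∧ (j : ℕ) < u) := by
    apply filter_congr; intro j _; simp
  rw [heq, card_filter_val 0 u hu]
  omega

lemma card_Sset : (Sset π).card = mval π := by
  have himg : (Sset π).image π.symm
      = ((univ : Finset (Fin n)).filter fun j : Fin n => (j : ℕ) < mval π) := by
    ext p
    simp only [mem_image, mem_filter, mem_univ, true_and]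
    constructor
    · rintro ⟨v, hv, rfl⟩; exact (mem_Sset.mp hv)
    · intro hp
      refine ⟨π p, ?_, π.symm_apply_apply p⟩
      rw [mem_Sset, posv_pi]; exact hp
  have := Finset.card_image_of_injective (Sset π) π.symm.injective
  rw [himg] at this
  rw [← this, card_filter_val_lt (mval π) (le_of_lt mval_lt)]

lemma fin_eq_zero_of_val {x : Fin n} (h : (x : ℕ) = 0) : x = 0 := by
  apply Fin.ext; simp [h]

lemma fin_pos_of_ne_zero {x : Fin n} (hx : x ≠ 0) : (0 : Fin n) < x := by
  rcases Nat.eq_zero_or_pos (x : ℕ) with h | h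
  · exact absurd (fin_eq_zero_of_val h) hx
  · have h0 : ((0 : Fin n) : ℕ) = 0 := by simp
    rw [Fin.lt_def, h0]
    exact h

lemma partition_count (v : Fin n) :
    ((Sset π).filter (· ≤ v)).card + ((Tset π).filter (· ≤ v)).card = (v : ℕ) := by
  classical
  have hdisj : Disjoint ((Sset π).filter (· ≤ v)) ((Tset π).filter (· ≤ v)) := by
    rw [Finset.disjoint_left]
    intro a ha hb
    rw [mem_filter, mem_Sset] at ha
    rw [mem_filter, mem_Tset] at hb
    omega
  rw [← Finset.card_union_of_disjoint hdisj]
  have hun : (Sset π).filter (· ≤ v) ∪ (Tset π).filter (· ≤ v)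
      = (univ : Finset (Fin n)).filter fun x : Fin n => 1 ≤ (x : ℕ) ∧ (x : ℕ) < (v : ℕ) + 1 := by
    ext x
    simp only [mem_union, mem_filter, mem_univ, true_and, mem_Sset, mem_Tset]
    constructor
    · rintro (⟨h1, h2⟩ | ⟨h1, h2⟩) <;>
      · refine ⟨?_, by rw [Fin.le_def] at h2; omega⟩
        rcases Nat.eq_zero_or_pos (x : ℕ) with h0 | h0
        · exfalso
          have : x = 0 := fin_eq_zero_of_val h0
          rw [this] at h1
          have : posv π (0 : Fin n) = mval π := rfl
          omega
        · omega
    · rintro ⟨h1, h2⟩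
      have hx0 : x ≠ 0 := by
        intro hh; rw [hh] at h1; simp at h1
      have : posv π x ≠ mval π := fun hh => hx0 (posv_eq_mval_iff.mp hh)
      have hle : x ≤ v := by rw [Fin.le_def]; omega
      rcases lt_or_gt_of_ne this with hlt | hgt
      · exact Or.inl ⟨hlt, hle⟩
      · exact Or.inr ⟨hgt, hle⟩
  rw [hun, card_filter_val 1 ((v : ℕ) + 1) (by omega)]
  omega

lemma filter_le_add_gt (A : Finset (Fin n)) (v : Fin n) :
    (A.filter (· ≤ v)).card + (A.filter (v < ·)).card = A.card := by
  classical
  have h1 := Finset.card_filter_add_card_filter_not (s := A) (p := (· ≤ v))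
  have h2 : A.filter (fun a => ¬ a ≤ v) = A.filter (v < ·) := by
    apply filter_congr; intro x _; simp [not_le]
  rw [h2] at h1
  exact h1

lemma filter_le_card_of_mem (A : Finset (Fin n)) {v : Fin n} (hv : v ∈ A) :
    (A.filter (· ≤ v)).card = (A.filter (· < v)).card + 1 := by
  classical
  have : A.filter (· ≤ v) = insert v (A.filter (· < v)) := by
    ext x
    simp only [mem_filter, mem_insert]
    constructor
    · rintro ⟨hx, hle⟩
      rcases eq_or_lt_of_le hle with h | h
      · exact Or.inl h
      · exact Or.inr ⟨hx, h⟩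
    · rintro (rfl | ⟨hx, hlt⟩)
      · exact ⟨hv, le_refl _⟩
      · exact ⟨hx, le_of_lt hlt⟩
  rw [this, Finset.card_insert_of_notMem (by simp [mem_filter])]

end

section
variable [NeZero n] {π : Equiv.Perm (Fin n)}

lemma viol_iff (hV : Valley π) {k : ℕ} (hk : 2 ≤ k) (hkn : k < n) :
    (∃ i j : Fin n, (j : ℕ) = (i : ℕ) + k ∧ ((π j : ℕ) = (π i : ℕ) + 1)) ↔
      ((⟨k - 1, by omega⟩ : Fin n) ∈ Sset π ∧ (⟨k, hkn⟩ : Fin n) ∉ Sset π) := by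
  classical
  constructor
  · rintro ⟨i, j, hji, hvw⟩
    set v := π i with hv
    set w := π j with hw
    have hposv : posv π v = (i : ℕ) := posv_pi i
    have hposw : posv π w = (j : ℕ) := posv_pi j
    rcases lt_trichotomy (j : ℕ) (mval π) with hjm | hjm | hjm
    · exfalso
      have him : (i : ℕ) < mval π := by omega
      obtain ⟨hvS, hcv⟩ := count_left hV him
      obtain ⟨hwS, hcw⟩ := count_left hV hjm
      simp only [Fin.eta] at hcv hcw hvS hwS
      rw [← hv] at hcv hvS
      rw [← hw] at hcw hwS
      have hsub : (Sset π).filter (fun s => w < s) ⊆ (Sset π).filter (fun s => v < s) := by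
        intro x hx
        rw [mem_filter] at hx ⊢
        refine ⟨hx.1, ?_⟩
        rw [Fin.lt_def] at hx ⊢
        omega
      have := Finset.card_le_card hsub
      rw [hcv, hcw] at this
      omega
    · exfalso
      have : j = (⟨mval π, mval_lt⟩ : Fin n) := Fin.ext hjm
      rw [this] at hw
      rw [pi_mval] at hw
      have : (w : ℕ) = 0 := by rw [hw]; simp
      omega
    · rcases lt_trichotomy (i : ℕ) (mval π) with him | him | him
      · -- main case
        obtain ⟨hvS, hcv⟩ := count_left hV him
        obtain ⟨hwT, hcw⟩ := count_right hV hjm j.isLt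
        simp only [Fin.eta] at hcv hcw hvS hwT
        rw [← hv] at hcv hvS
        rw [← hw] at hcw hwT
        have hTeq : (Tset π).filter (· < w) = (Tset π).filter (· ≤ v) := by
          apply filter_congr
          intro x _
          rw [Fin.lt_def, Fin.le_def]
          omega
        rw [hTeq] at hcw
        have hpart := partition_count (π := π) v
        have hsplit := filter_le_add_gt (Sset π) v
        rw [card_Sset] at hsplit
        have hvk : (v : ℕ) = k - 1 := by omega
        have hwk : (w : ℕ) = k := by omega
        constructor
        · have : (⟨k - 1, by omega⟩ : Fin n) = v := Fin.ext (by simp [hvk])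
          rw [this]; exact hvS
        · have : (⟨k, hkn⟩ : Fin n) = w := Fin.ext (by simp [hwk])
          rw [this]
          exact (mem_Tset_iff.mp hwT).1
      · exfalso
        have hv0 : v = 0 := by
          have : i = (⟨mval π, mval_lt⟩ : Fin n) := Fin.ext him
          rw [this] at hv
          rw [pi_mval] at hv
          exact hv
        have hw1 : (w : ℕ) = 1 := by
          have : (v : ℕ) = 0 := by rw [hv0]; simp
          omega
        obtain ⟨hwT, hcw⟩ := count_right hV hjm j.isLt
        simp only [Fin.eta] at hcw hwT
        rw [← hw] at hcw hwT
        have hempty : (Tset π).filter (· < w) = ∅ := by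
          rw [Finset.filter_eq_empty_iff]
          intro x hx
          rw [Fin.lt_def, hw1]
          intro hc
          have : x = 0 := fin_eq_zero_of_val (by omega)
          rw [this] at hx
          exact absurd rfl (mem_Tset_iff.mp hx).2
        rw [hempty] at hcw
        simp at hcw
        omega
      · exfalso
        obtain ⟨hvT, hcv⟩ := count_right hV him i.isLt
        obtain ⟨hwT, hcw⟩ := count_right hV hjm j.isLt
        simp only [Fin.eta] at hcv hcw hvT hwT
        rw [← hv] at hcv hvT
        rw [← hw] at hcw hwT
        have hTeq : (Tset π).filter (· < w) = (Tset π).filter (· ≤ v) := by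
          apply filter_congr
          intro x _
          rw [Fin.lt_def, Fin.le_def]
          omega
        rw [hTeq, filter_le_card_of_mem _ hvT, hcv] at hcw
        omega
  · rintro ⟨hva, hvb⟩
    set va : Fin n := ⟨k - 1, by omega⟩ with hva'
    set vb : Fin n := ⟨k, hkn⟩ with hvb'
    have hvb0 : vb ≠ 0 := by
      intro h
      have : (vb : ℕ) = 0 := by rw [h]; simp
      simp [hvb'] at this
      omega
    have hvbT : vb ∈ Tset π := mem_Tset_iff.mpr ⟨hvb, hvb0⟩
    have hii : posv π va < mval π := mem_Sset.mp hva
    have hjj : mval π < posv π vb := mem_Tset.mp hvbT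
    have hπa : π ⟨posv π va, lt_trans hii mval_lt⟩ = va := by
      have : (⟨posv π va, lt_trans hii mval_lt⟩ : Fin n) = π.symm va := Fin.ext rfl
      rw [this, Equiv.apply_symm_apply]
    have hπb : π ⟨posv π vb, (π.symm vb).isLt⟩ = vb := by
      have : (⟨posv π vb, (π.symm vb).isLt⟩ : Fin n) = π.symm vb := Fin.ext rfl
      rw [this, Equiv.apply_symm_apply]
    obtain ⟨_, hcv⟩ := count_left hV hii
    rw [hπa] at hcv
    obtain ⟨_, hcw⟩ := count_right hV hjj (π.symm vb).isLt
    rw [hπb] at hcw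
    have hTeq : (Tset π).filter (· < vb) = (Tset π).filter (· ≤ va) := by
      apply filter_congr
      intro x _
      rw [Fin.lt_def, Fin.le_def]
      simp only [hva', hvb']
      omega
    rw [hTeq] at hcw
    have hpart := partition_count (π := π) va
    have hsplit := filter_le_add_gt (Sset π) va
    rw [card_Sset] at hsplit
    have hvaval : (va : ℕ) = k - 1 := rfl
    refine ⟨π.symm va, π.symm vb, ?_, ?_⟩
    · show posv π vb = posv π va + k
      omega
    · rw [Equiv.apply_symm_apply, Equiv.apply_symm_apply]
      show (vb : ℕ) = (va : ℕ) + 1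
      simp only [hva', hvb']
      omega

end

section
variable [NeZero n] {π : Equiv.Perm (Fin n)}

lemma valley_ext (hV : Valley π) {π' : Equiv.Perm (Fin n)} (hV' : Valley π')
    (hS : Sset π = Sset π') : π = π' := by
  have hm : mval π = mval π' := by
    rw [← card_Sset (π := π), ← card_Sset (π := π'), hS]
  apply Equiv.ext
  intro p
  rcases lt_trichotomy (p : ℕ) (mval π) with h | h | h
  · obtain ⟨h1, c1⟩ := count_left hV h
    obtain ⟨h1', c1'⟩ := count_left hV' (by rw [← hm]; exact h)
    simp only [Fin.eta] at h1 c1 h1' c1'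
    rw [← hS] at h1' c1'
    exact count_inj (Sset π) h1 h1' (by rw [c1, c1'])
  · have hp : p = (⟨mval π, mval_lt⟩ : Fin n) := Fin.ext h
    have hp' : p = (⟨mval π', mval_lt⟩ : Fin n) := Fin.ext (show (p : ℕ) = mval π' from by rw [← hm]; exact h)
    rw [show π p = 0 from by rw [hp]; exact pi_mval,
      show π' p = 0 from by rw [hp']; exact pi_mval]
  · obtain ⟨h1, c1⟩ := count_right hV h p.isLt
    obtain ⟨h1', c1'⟩ := count_right hV' (by rw [← hm]; exact h) p.isLt
    simp only [Fin.eta] at h1 c1 h1' c1'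
    have hT : Tset π = Tset π' := by
      ext x; rw [mem_Tset_iff, mem_Tset_iff, hS]
    rw [← hT] at h1' c1'
    exact count_inj' (Tset π) h1 h1' (by rw [c1, c1', hm])

end

section construction
variable [NeZero n]

def TcF (F : Finset (Fin n)) : Finset (Fin n) :=
  Finset.univ.filter fun x => x ∉ F ∧ x ≠ 0

def posN (F : Finset (Fin n)) (v : Fin n) : ℕ :=
  if v ∈ F then (F.filter (v < ·)).card
  else if v = 0 then F.card
  else F.card + 1 + ((TcF F).filter (· < v)).card

lemma mem_TcF {F : Finset (Fin n)} {v : Fin n} : v ∈ TcF F ↔ v ∉ F ∧ v ≠ 0 := by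
  simp [TcF]

variable {F : Finset (Fin n)} (h0 : (0 : Fin n) ∉ F)

include h0 in
lemma card_TcF : F.card + 1 + (TcF F).card = n := by
  classical
  have hTc : TcF F = univ \ insert 0 F := by
    ext x
    simp only [mem_TcF, mem_sdiff, mem_univ, true_and, mem_insert]
    tauto
  have hins : (insert (0 : Fin n) F).card = F.card + 1 := by
    rw [Finset.card_insert_of_notMem h0]
  have hle : (insert (0 : Fin n) F).card ≤ n := by
    have := Finset.card_le_card (Finset.subset_univ (insert 0 F))
    simpa using this
  rw [hTc, Finset.card_sdiff_of_subset (Finset.subset_univ _)]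
  simp only [Finset.card_univ, Fintype.card_fin]
  omega

lemma card_filter_gt_of_mem {A : Finset (Fin n)} {v : Fin n} (hv : v ∈ A) :
    (A.filter (v < ·)).card < A.card := by
  apply Finset.card_lt_card
  rw [Finset.ssubset_iff_of_subset (Finset.filter_subset _ _)]
  exact ⟨v, hv, by simp⟩

lemma card_filter_lt_of_mem' {A : Finset (Fin n)} {v : Fin n} (hv : v ∈ A) :
    (A.filter (· < v)).card < A.card := by
  apply Finset.card_lt_card
  rw [Finset.ssubset_iff_of_subset (Finset.filter_subset _ _)]
  exact ⟨v, hv, by simp⟩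

include h0 in
lemma posN_lt (v : Fin n) : posN F v < n := by
  have hc := card_TcF h0
  unfold posN
  by_cases hv : v ∈ F
  · rw [if_pos hv]
    have := card_filter_gt_of_mem hv
    omega
  · rw [if_neg hv]
    by_cases hv0 : v = 0
    · rw [if_pos hv0]; omega
    · rw [if_neg hv0]
      have hvT : v ∈ TcF F := mem_TcF.mpr ⟨hv, hv0⟩
      have := card_filter_lt_of_mem' hvT
      omega

lemma posN_lt_card_iff {v : Fin n} : posN F v < F.card ↔ v ∈ F := by
  unfold posN
  by_cases hv : v ∈ F
  · rw [if_pos hv]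
    exact ⟨fun _ => hv, fun _ => card_filter_gt_of_mem hv⟩
  · rw [if_neg hv]
    by_cases hv0 : v = 0
    · rw [if_pos hv0]
      exact ⟨fun hh => absurd hh (lt_irrefl _), fun hh => absurd hh hv⟩
    · rw [if_neg hv0]
      exact ⟨fun hh => by omega, fun hh => absurd hh hv⟩

include h0 in
lemma posN_eq_card_iff {v : Fin n} : posN F v = F.card ↔ v = 0 := by
  unfold posN
  by_cases hv : v ∈ F
  · rw [if_pos hv]
    have := card_filter_gt_of_mem hv
    constructor
    · omega
    · intro h; rw [h] at hv; exact absurd hv h0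
  · rw [if_neg hv]
    by_cases hv0 : v = 0
    · simp [hv0]
    · rw [if_neg hv0]; omega

include h0 in
lemma posN_inj {a b : Fin n} (h : posN F a = posN F b) : a = b := by
  by_cases ha : a ∈ F <;> by_cases hb : b ∈ F
  · apply count_inj F ha hb
    unfold posN at h
    rw [if_pos ha, if_pos hb] at h
    exact h
  · exfalso
    have h1 : posN F a < F.card := posN_lt_card_iff.mpr ha
    have h2 : ¬ posN F b < F.card := fun hc => hb (posN_lt_card_iff.mp hc)
    omega
  · exfalso
    have h1 : posN F b < F.card := posN_lt_card_iff.mpr hb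
    have h2 : ¬ posN F a < F.card := fun hc => ha (posN_lt_card_iff.mp hc)
    omega
  · by_cases ha0 : a = 0 <;> by_cases hb0 : b = 0
    · rw [ha0, hb0]
    · exfalso
      have h1 : posN F a = F.card := (posN_eq_card_iff h0).mpr ha0
      have h2 : ¬ posN F b = F.card := fun hc => hb0 ((posN_eq_card_iff h0).mp hc)
      omega
    · exfalso
      have h1 : posN F b = F.card := (posN_eq_card_iff h0).mpr hb0
      have h2 : ¬ posN F a = F.card := fun hc => ha0 ((posN_eq_card_iff h0).mp hc)
      omega
    · have haT : a ∈ TcF F := mem_TcF.mpr ⟨ha, ha0⟩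
      have hbT : b ∈ TcF F := mem_TcF.mpr ⟨hb, hb0⟩
      apply count_inj' (TcF F) haT hbT
      unfold posN at h
      rw [if_neg ha, if_neg ha0, if_neg hb, if_neg hb0] at h
      omega

noncomputable def permF (F : Finset (Fin n)) (h0 : (0 : Fin n) ∉ F) : Equiv.Perm (Fin n) :=
  (Equiv.ofBijective (fun v => (⟨posN F v, posN_lt h0 v⟩ : Fin n))
    ((Finite.injective_iff_bijective).mp
      (fun a b h => posN_inj h0 (by simpa [Fin.ext_iff] using h)))).symm

lemma posv_permF (v : Fin n) : posv (permF F h0) v = posN F v := rfl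

lemma mval_permF : mval (permF F h0) = F.card := by
  show posN F 0 = F.card
  exact (posN_eq_card_iff h0).mpr rfl

lemma Sset_permF : Sset (permF F h0) = F := by
  ext v
  rw [mem_Sset, posv_permF, mval_permF]
  exact posN_lt_card_iff

lemma permF_posN (i : ℕ) (h : i < n) : posN F (permF F h0 ⟨i, h⟩) = i := by
  rw [← posv_permF h0, posv_apply]

include h0 in
lemma valley_permF : Valley (permF F h0) := by
  intro i h
  set π := permF F h0 with hπ
  have hx := permF_posN h0 i (Nat.lt_of_succ_lt h)
  have hy := permF_posN h0 (i + 1) h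
  set x := π ⟨i, Nat.lt_of_succ_lt h⟩ with hxd
  set y := π ⟨i + 1, h⟩ with hyd
  rw [mval_permF]
  constructor
  · intro him
    rcases eq_or_lt_of_le him with heq | hlt
    · -- i+1 = F.card : y = 0, x ∈ F
      have hy0 : y = 0 := (posN_eq_card_iff h0).mp (by omega)
      have hxF : x ∈ F := posN_lt_card_iff.mp (by omega)
      have hx0 : x ≠ 0 := fun hc => h0 (hc ▸ hxF)
      rw [hy0]
      exact fin_pos_of_ne_zero hx0
    · have hxF : x ∈ F := posN_lt_card_iff.mp (by omega)
      have hyF : y ∈ F := posN_lt_card_iff.mp (by omega)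
      unfold posN at hx hy
      rw [if_pos hxF] at hx
      rw [if_pos hyF] at hy
      by_contra hc
      push_neg at hc
      have hsub : F.filter (y < ·) ⊆ F.filter (x < ·) := by
        intro z hz
        rw [Finset.mem_filter] at hz ⊢
        exact ⟨hz.1, lt_of_le_of_lt hc hz.2⟩
      have := Finset.card_le_card hsub
      omega
  · intro him
    rcases eq_or_lt_of_le (Nat.succ_le_of_lt him) with heq | hlt
    · -- F.card + 1 = i + 1, i.e. i = F.card : x = 0
      have hx0 : x = 0 := (posN_eq_card_iff h0).mp (by omega)
      have hyT : y ∈ TcF F := by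
        rw [mem_TcF]
        constructor
        · intro hc
          have := posN_lt_card_iff.mpr hc
          omega
        · intro hc
          have := (posN_eq_card_iff (F := F) h0).mpr hc
          omega
      rw [hx0]
      exact fin_pos_of_ne_zero (mem_TcF.mp hyT).2
    · have hxT : x ∈ TcF F := by
        rw [mem_TcF]
        refine ⟨fun hc => ?_, fun hc => ?_⟩
        · have := posN_lt_card_iff.mpr hc; omega
        · have := (posN_eq_card_iff (F := F) h0).mpr hc; omega
      have hyT : y ∈ TcF F := by
        rw [mem_TcF]
        refine ⟨fun hc => ?_, fun hc => ?_⟩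
        · have := posN_lt_card_iff.mpr hc; omega
        · have := (posN_eq_card_iff (F := F) h0).mpr hc; omega
      unfold posN at hx hy
      rw [if_neg (mem_TcF.mp hxT).1, if_neg (mem_TcF.mp hxT).2] at hx
      rw [if_neg (mem_TcF.mp hyT).1, if_neg (mem_TcF.mp hyT).2] at hy
      by_contra hc
      push_neg at hc
      have hsub : (TcF F).filter (· < y) ⊆ (TcF F).filter (· < x) := by
        intro z hz
        rw [Finset.mem_filter] at hz ⊢
        exact ⟨hz.1, lt_of_lt_of_le hz.2 hc⟩
      have := Finset.card_le_card hsub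
      omega

end construction

section avoid
variable [NeZero n] {π : Equiv.Perm (Fin n)}

lemma ascent_prop (hA : AvoidsCons231and132 π) {i : ℕ} (h2 : i + 2 < n)
    (hlt : π ⟨i, by omega⟩ < π ⟨i + 1, by omega⟩) :
    π ⟨i + 1, by omega⟩ < π ⟨i + 2, h2⟩ := by
  obtain ⟨c1, c2⟩ := hA ⟨i, by omega⟩ ⟨i + 1, by omega⟩ ⟨i + 2, h2⟩ rfl rfl
  have hne : π ⟨i + 2, h2⟩ ≠ π ⟨i, by omega⟩ := by
    intro h
    have := π.injective h
    rw [Fin.ext_iff] at this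
    simp at this
  have hne2 : π ⟨i + 2, h2⟩ ≠ π ⟨i + 1, by omega⟩ := by
    intro h
    have := π.injective h
    rw [Fin.ext_iff] at this
    simp at this
  rcases lt_or_gt_of_ne hne with hl | hl
  · exact absurd ⟨hl, hlt⟩ c1
  · rcases lt_or_gt_of_ne hne2 with hl2 | hl2
    · exact absurd ⟨hl, hl2⟩ c2
    · exact hl2

lemma pi_index_eq {a b : ℕ} (hab : a = b) (ha : a < n) (hb : b < n) :
    π ⟨a, ha⟩ = π ⟨b, hb⟩ := by subst hab; rfl

lemma avoids_valley (hA : AvoidsCons231and132 π) : Valley π := by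
  have ascij : ∀ d i : ℕ, (h : i + 1 + d < n) →
      π ⟨i, by omega⟩ < π ⟨i + 1, by omega⟩ → π ⟨i + d, by omega⟩ < π ⟨i + 1 + d, h⟩ := by
    intro d
    induction d with
    | zero => intro i h hlt; exact hlt
    | succ d ih =>
      intro i h hlt
      have hprev := ih i (by omega) hlt
      have hprev' : π ⟨i + d, by omega⟩ < π ⟨i + d + 1, by omega⟩ :=
        lt_of_lt_of_eq hprev (pi_index_eq (by omega) _ _)
      have hnext := ascent_prop hA (i := i + d) (by omega) hprev'
      calc π ⟨i + (d + 1), by omega⟩ = π ⟨i + d + 1, by omega⟩ := pi_index_eq (by omega) _ _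
        _ < π ⟨i + d + 2, by omega⟩ := hnext
        _ = π ⟨i + 1 + (d + 1), h⟩ := pi_index_eq (by omega) _ _
  intro i h
  constructor
  · intro him
    by_contra hc
    push_neg at hc
    have hne : π ⟨i, Nat.lt_of_succ_lt h⟩ ≠ π ⟨i + 1, h⟩ := by
      intro heq
      have := π.injective heq
      rw [Fin.ext_iff] at this
      simp at this
    have hlt : π ⟨i, Nat.lt_of_succ_lt h⟩ < π ⟨i + 1, h⟩ := lt_of_le_of_ne hc hne
    obtain ⟨d, hd⟩ : ∃ d, mval π = i + 1 + d := ⟨mval π - (i + 1), by omega⟩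
    have := ascij d i (by rw [← hd]; exact mval_lt) hlt
    have hm0 : π ⟨i + 1 + d, by rw [← hd]; exact mval_lt⟩ = 0 :=
      (pi_index_eq (by omega) _ mval_lt).trans pi_mval
    rw [hm0] at this
    have : (π ⟨i + d, by have := mval_lt (π := π); omega⟩ : ℕ) < ((0 : Fin n) : ℕ) :=
      this
    simp at this
  · intro hmi
    have base : ∀ (hh : mval π + 1 < n), π ⟨mval π, mval_lt⟩ < π ⟨mval π + 1, hh⟩ := by
      intro hh
      rw [pi_mval]
      apply fin_pos_of_ne_zero
      intro heq
      have : (⟨mval π + 1, hh⟩ : Fin n) = π.symm 0 := by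
        rw [← heq, Equiv.symm_apply_apply]
      rw [Fin.ext_iff] at this
      have : mval π + 1 = mval π := this
      omega
    obtain ⟨d, hd⟩ : ∃ d, i = mval π + d := ⟨i - mval π, by omega⟩
    rcases Nat.eq_zero_or_pos d with hd0 | hd0
    · rw [hd0] at hd
      have hb := base (by omega)
      calc π ⟨i, Nat.lt_of_succ_lt h⟩ = π ⟨mval π, mval_lt⟩ := pi_index_eq (by omega) _ _
        _ < π ⟨mval π + 1, by omega⟩ := hb
        _ = π ⟨i + 1, h⟩ := pi_index_eq (by omega) _ _
    · obtain ⟨e, he⟩ : ∃ e, d = e + 1 := ⟨d - 1, by omega⟩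
      have hbase := base (by omega)
      have := ascij e (mval π) (by omega) hbase
      have hthis' : π ⟨mval π + e, by omega⟩ < π ⟨mval π + e + 1, by omega⟩ :=
        lt_of_lt_of_eq this (pi_index_eq (by omega) _ _)
      have h2 := ascent_prop hA (i := mval π + e) (by omega) hthis'
      calc π ⟨i, Nat.lt_of_succ_lt h⟩ = π ⟨mval π + e + 1, by omega⟩ := pi_index_eq (by omega) _ _
        _ < π ⟨mval π + e + 2, by omega⟩ := h2
        _ = π ⟨i + 1, h⟩ := pi_index_eq (by omega) _ _

lemma valley_avoids (hV : Valley π) : AvoidsCons231and132 π := by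
  intro i j l hj hl
  have hi2 : (i : ℕ) + 2 < n := by rw [← hl]; exact l.isLt
  have hjj : j = (⟨(i : ℕ) + 1, by omega⟩ : Fin n) := Fin.ext hj
  have hll : l = (⟨(i : ℕ) + 2, hi2⟩ : Fin n) := Fin.ext hl
  have hii : i = (⟨(i : ℕ), by omega⟩ : Fin n) := Fin.ext rfl
  rcases le_or_gt ((i : ℕ) + 1) (mval π) with hm | hm
  · have h1 : π j < π i := by
      rw [hjj]
      have := (hV (i : ℕ) (by omega)).1 hm
      simp only [Fin.eta] at this
      exact this
    constructor
    · rintro ⟨-, h3⟩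
      exact absurd h1 (not_lt.mpr (le_of_lt h3))
    · rintro ⟨h2, h3⟩
      exact absurd (lt_trans h2 h3) (not_lt.mpr (le_of_lt h1))
  · have h1 : π j < π l := by
      rw [hjj]
      have := (hV ((i : ℕ) + 1) hi2).2 (by omega)
      exact lt_of_lt_of_eq this (congrArg (⇑π) hll.symm)
    constructor
    · rintro ⟨h2, h3⟩
      exact absurd (lt_trans h2 h3) (not_lt.mpr (le_of_lt h1))
    · rintro ⟨h2, h3⟩
      exact absurd h1 (not_lt.mpr (le_of_lt h3))

lemma avoids_iff_valley : AvoidsCons231and132 π ↔ Valley π :=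
  ⟨avoids_valley, valley_avoids⟩

end avoid

section counting
variable {α : Type*} [Fintype α] [DecidableEq α]

lemma count_A (a : α) :
    ((univ : Finset (Finset α)).filter fun F => a ∉ F).card = 2 ^ (Fintype.card α - 1) := by
  have h1 : ((univ : Finset (Finset α)).filter fun F => a ∉ F)
      = ((univ : Finset α).erase a).powerset := by
    ext F
    simp only [mem_filter, mem_univ, true_and, Finset.mem_powerset, Finset.subset_erase]
    constructor
    · intro h; exact ⟨Finset.subset_univ F, h⟩
    · intro h; exact h.2
  rw [h1, Finset.card_powerset, Finset.card_erase_of_mem (mem_univ a), Finset.card_univ]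

lemma count_B (a b c : α) (hab : a ≠ b) (hac : a ≠ c) (hbc : b ≠ c) :
    ((univ : Finset (Finset α)).filter fun F => a ∉ F ∧ b ∈ F ∧ c ∉ F).card
      = 2 ^ (Fintype.card α - 3) := by
  set R := (((univ : Finset α).erase a).erase b).erase c with hR
  have hcardR : R.card = Fintype.card α - 3 := by
    rw [hR, Finset.card_erase_of_mem, Finset.card_erase_of_mem, Finset.card_erase_of_mem,
      Finset.card_univ]
    · omega
    · exact mem_univ a
    · rw [Finset.mem_erase]; exact ⟨hab.symm, mem_univ b⟩
    · rw [Finset.mem_erase, Finset.mem_erase]; exact ⟨hbc.symm, hac.symm, mem_univ c⟩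
  have hbR : b ∉ R := by rw [hR]; simp
  have h1 : ((univ : Finset (Finset α)).filter fun F => a ∉ F ∧ b ∈ F ∧ c ∉ F)
      = R.powerset.image (insert b) := by
    ext F
    simp only [mem_filter, mem_univ, true_and, mem_image, Finset.mem_powerset]
    constructor
    · rintro ⟨ha, hb, hc⟩
      refine ⟨F.erase b, ?_, Finset.insert_erase hb⟩
      intro x hx
      rw [Finset.mem_erase] at hx
      rw [hR, Finset.mem_erase, Finset.mem_erase, Finset.mem_erase]
      refine ⟨?_, hx.1, ?_, mem_univ x⟩
      · intro hxc; rw [hxc] at hx; exact hc hx.2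
      · intro hxa; rw [hxa] at hx; exact ha hx.2
    · rintro ⟨G, hG, rfl⟩
      have haG : a ∉ G := fun h => by
        have := hG h
        rw [hR, Finset.mem_erase, Finset.mem_erase, Finset.mem_erase] at this
        exact this.2.2.1 rfl
      have hcG : c ∉ G := fun h => by
        have := hG h; rw [hR, Finset.mem_erase] at this; exact this.1 rfl
      refine ⟨?_, Finset.mem_insert_self b G, ?_⟩
      · rw [Finset.mem_insert]; rintro (h | h); exact hab h; exact haG h
      · rw [Finset.mem_insert]; rintro (h | h); exact hbc h.symm; exact hcG h
  rw [h1, Finset.card_image_of_injOn, Finset.card_powerset, hcardR]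
  intro G hG G' hG' h
  simp only [Finset.coe_powerset, Set.mem_preimage, Set.mem_powerset_iff, Finset.coe_subset]
    at hG hG'
  have hbG : b ∉ G := fun hh => hbR (hG hh)
  have hbG' : b ∉ G' := fun hh => hbR (hG' hh)
  rw [← Finset.erase_insert hbG, ← Finset.erase_insert hbG', h]

lemma count_finsets (a b c : α) (hab : a ≠ b) (hac : a ≠ c) (hbc : b ≠ c)
    (hcard : 3 ≤ Fintype.card α) :
    Nat.card {F : Finset α // a ∉ F ∧ ¬(b ∈ F ∧ c ∉ F)} = 3 * 2 ^ (Fintype.card α - 3) := by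
  rw [Nat.card_eq_fintype_card, Fintype.card_subtype]
  have hsplit : ((univ : Finset (Finset α)).filter fun F => a ∉ F ∧ ¬(b ∈ F ∧ c ∉ F))
      = ((univ : Finset (Finset α)).filter fun F => a ∉ F) \
        ((univ : Finset (Finset α)).filter fun F => a ∉ F ∧ b ∈ F ∧ c ∉ F) := by
    ext F
    simp only [mem_filter, mem_univ, true_and, Finset.mem_sdiff]
    tauto
  rw [hsplit, Finset.card_sdiff_of_subset (by intro F hF; rw [mem_filter] at hF ⊢; exact ⟨hF.1, hF.2.1⟩),
    count_A a, count_B a b c hab hac hbc]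
  have h1 : Fintype.card α - 1 = (Fintype.card α - 3) + 2 := by omega
  rw [h1, pow_add]
  ring_nf
  omega

end counting


/-- For `k ≥ 2` and `n ≥ k+1`, the number of permutations of length `n`
avoiding the consecutive patterns 231 and 132 and with no pair of positions
`i, i+k` such that `π (i+k) = π i + 1` equals `3·2^(n-3)`. -/
theorem stmt5 (k n : ℕ) (hk : 2 ≤ k) (hn : k + 1 ≤ n) :
    Nat.card {π : Equiv.Perm (Fin n) // AvoidsCons231and132 π ∧
      ¬ ∃ i j : Fin n, (j : ℕ) = (i : ℕ) + k ∧ ((π j : ℕ) = (π i : ℕ) + 1)} =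
    3 * 2 ^ (n - 3) := by
  haveI : NeZero n := ⟨by omega⟩
  have hn3 : 3 ≤ n := by omega
  have hkn : k < n := by omega
  have hk1 : k - 1 < n := by omega
  set va : Fin n := ⟨k - 1, hk1⟩ with hva
  set vb : Fin n := ⟨k, hkn⟩ with hvb
  have e : {π : Equiv.Perm (Fin n) // AvoidsCons231and132 π ∧
      ¬ ∃ i j : Fin n, (j : ℕ) = (i : ℕ) + k ∧ ((π j : ℕ) = (π i : ℕ) + 1)} ≃
      {F : Finset (Fin n) // (0 : Fin n) ∉ F ∧ ¬(va ∈ F ∧ vb ∉ F)} := by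
    refine
      { toFun := fun p => ⟨Sset p.1, ?_, ?_⟩,
        invFun := fun q => ⟨permF q.1 q.2.1, ?_, ?_⟩,
        left_inv := ?_, right_inv := ?_ }
    · intro hc
      exact absurd (mem_Sset.mp hc) (lt_irrefl (mval p.1))
    · intro hc
      exact p.2.2 ((viol_iff (avoids_valley p.2.1) hk hkn).mpr hc)
    · exact valley_avoids (valley_permF q.2.1)
    · intro hv
      apply q.2.2
      have := (viol_iff (valley_permF q.2.1) hk hkn).mp hv
      rwa [Sset_permF] at this
    · rintro ⟨π, hA, hvio⟩
      apply Subtype.ext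
      dsimp only
      exact valley_ext (valley_permF _) (avoids_valley hA) (Sset_permF _)
    · rintro ⟨F, h0, hcond⟩
      apply Subtype.ext
      dsimp only
      exact Sset_permF _
  rw [Nat.card_congr e]
  have h0a : (0 : Fin n) ≠ va := by
    intro h
    have := congrArg Fin.val h
    simp [hva] at this
    omega
  have h0b : (0 : Fin n) ≠ vb := by
    intro h
    have := congrArg Fin.val h
    simp [hvb] at this
    omega
  have hab : va ≠ vb := by
    intro h
    have := congrArg Fin.val h
    simp [hva, hvb] at this
    omega
  have := count_finsets (0 : Fin n) va vb h0a h0b hab (by simp [Fintype.card_fin]; omega)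
  rw [this, Fintype.card_fin]
end

section
/- The generating function A_3(q,z) = Σ_w q^{|w|} z^{s(w)}, where the sum is over all words w over the alphabet {1,2,3} and s(w) = |{i : w_{i+2} − w_i = 2}|, equals 1/((1 − q²(1−z))(1 − 3q − q²(z−1))). -/
/-- For a word `w` of length `n` over the alphabet {1,2,3} (modeled as
`Fin n → Fin 3`, the letter at position `i` being `(w i : ℕ) + 1`),
`sStat w = |{i : w_{i+2} − w_i = 2}|`. -/
noncomputable def sStat {n : ℕ} (w : Fin n → Fin 3) : ℕ :=
  Nat.card {ij : Fin n × Fin n //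
    (ij.2 : ℕ) = (ij.1 : ℕ) + 2 ∧ ((w ij.2 : ℕ) = (w ij.1 : ℕ) + 2)}

namespace Stmt8Aux

open Finset Polynomial

/-- total extension of a word to ℕ -/
def ext {n : ℕ} (w : Fin n → Fin 3) (i : ℕ) : ℕ :=
  if h : i < n then (w ⟨i, h⟩ : ℕ) else 0

lemma ext_lt {n : ℕ} (w : Fin n → Fin 3) (i : ℕ) (h : i < n) :
    ext w i = (w ⟨i, h⟩ : ℕ) := dif_pos h

lemma sStat_eq {n : ℕ} (w : Fin n → Fin 3) :
    sStat w = ∑ i ∈ Finset.range n,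
      (if i + 2 < n ∧ ext w (i + 2) = ext w i + 2 then 1 else 0) := by
  classical
  rw [sStat, Nat.card_eq_fintype_card, Fintype.card_subtype, ← Finset.card_filter]
  apply Finset.card_bij (fun ij _ => (ij.1 : ℕ))
  · rintro ⟨i, j⟩ hij
    simp only [Finset.mem_filter, Finset.mem_univ, true_and] at hij
    obtain ⟨h1, h2⟩ := hij
    have hj := j.isLt
    have hi2 : (i : ℕ) + 2 < n := by omega
    refine Finset.mem_filter.2 ⟨Finset.mem_range.2 i.isLt, hi2, ?_⟩
    rw [ext_lt w _ hi2, ext_lt w _ i.isLt]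
    have : (⟨(i : ℕ) + 2, hi2⟩ : Fin n) = j := Fin.ext (by simpa using h1.symm)
    rw [this]
    exact h2
  · rintro ⟨i, j⟩ hij ⟨i', j'⟩ hij' h
    simp only [Finset.mem_filter, Finset.mem_univ, true_and] at hij hij'
    have : i = i' := Fin.ext h
    subst this
    have : j = j' := by apply Fin.ext; omega
    subst this; rfl
  · intro k hk
    simp only [Finset.mem_filter, Finset.mem_range] at hk
    obtain ⟨hk1, hk2, hk3⟩ := hk
    refine ⟨⟨⟨k, hk1⟩, ⟨k + 2, hk2⟩⟩, ?_, rfl⟩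
    simp only [Finset.mem_filter, Finset.mem_univ, true_and]
    rw [ext_lt w _ hk2, ext_lt w _ hk1] at hk3
    exact hk3

lemma sStat_small {n : ℕ} (hn : n ≤ 2) (w : Fin n → Fin 3) : sStat w = 0 := by
  rw [sStat_eq]
  apply Finset.sum_eq_zero
  intro i hi
  rw [if_neg]
  rintro ⟨h, -⟩
  omega


lemma ext_cons_succ {n : ℕ} (c : Fin 3) (v : Fin n → Fin 3) (i : ℕ) :
    ext (Fin.cons c v : Fin (n + 1) → Fin 3) (i + 1) = ext v i := by
  unfold ext
  by_cases h : i < n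
  · rw [dif_pos (by omega : i + 1 < n + 1), dif_pos h]
    have : (⟨i + 1, by omega⟩ : Fin (n + 1)) = Fin.succ ⟨i, h⟩ := rfl
    rw [this, Fin.cons_succ]
  · rw [dif_neg (by omega), dif_neg h]

lemma ext_cons_zero {n : ℕ} (c : Fin 3) (v : Fin n → Fin 3) :
    ext (Fin.cons c v : Fin (n + 1) → Fin 3) 0 = (c : ℕ) := by
  unfold ext
  rw [dif_pos (by omega : 0 < n + 1)]
  have : (⟨0, by omega⟩ : Fin (n + 1)) = 0 := rfl
  rw [this, Fin.cons_zero]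

lemma sStat_cons {n : ℕ} (c : Fin 3) (v : Fin (n + 2) → Fin 3) :
    sStat (Fin.cons c v : Fin (n + 3) → Fin 3)
      = sStat v + (if (c : ℕ) = 0 ∧ (v 1 : ℕ) = 2 then 1 else 0) := by
  rw [sStat_eq, sStat_eq]
  rw [Finset.sum_range_succ']
  congr 1
  · apply Finset.sum_congr rfl
    intro i _
    rw [ext_cons_succ, ext_cons_succ]
    apply if_congr (Iff.and (by omega) Iff.rfl) rfl rfl
  · rw [show (0 : ℕ) + 2 = 1 + 1 from rfl, ext_cons_succ, ext_cons_zero]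
    rw [ext_lt v 1 (by omega)]
    have h1 : (⟨1, by omega⟩ : Fin (n + 2)) = 1 := by
      apply Fin.ext; simp [Fin.val_one]
    rw [h1]
    have hc := c.isLt
    have hv := (v 1).isLt
    apply if_congr (by constructor <;> (intro h; omega)) rfl rfl


noncomputable def z : Polynomial ℤ := Polynomial.X

noncomputable def A (n : ℕ) : Polynomial ℤ :=
  ∑ w : Fin n → Fin 3, (Polynomial.X : Polynomial ℤ) ^ sStat w

noncomputable def zi (x : Fin 3) : Polynomial ℤ := if (x : ℕ) = 2 then z else 1

noncomputable def B (n : ℕ) : Polynomial ℤ :=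
  ∑ w : Fin (n + 2) → Fin 3, z ^ sStat w * zi (w 1)

noncomputable def Cs (n : ℕ) : Polynomial ℤ :=
  ∑ w : Fin (n + 2) → Fin 3, z ^ sStat w * zi (w 0)

noncomputable def D (n : ℕ) : Polynomial ℤ :=
  ∑ w : Fin (n + 2) → Fin 3, z ^ sStat w * zi (w 0) * zi (w 1)

lemma sum_cons {n : ℕ} (f : (Fin (n + 1) → Fin 3) → Polynomial ℤ) :
    ∑ w : Fin (n + 1) → Fin 3, f w
      = ∑ c : Fin 3, ∑ v : Fin n → Fin 3, f (Fin.cons c v) := by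
  rw [← (Fin.consEquiv (fun _ : Fin (n + 1) => Fin 3)).sum_comp f, Fintype.sum_prod_type]
  rfl

lemma cons_one {n : ℕ} (c : Fin 3) (v : Fin (n + 2) → Fin 3) :
    (Fin.cons c v : Fin (n + 3) → Fin 3) 1 = v 0 := by
  have : (1 : Fin (n + 3)) = Fin.succ 0 := rfl
  rw [this, Fin.cons_succ]

lemma zpow_ite (P : Prop) [Decidable P] :
    (z : Polynomial ℤ) ^ (if P then 1 else 0) = if P then z else 1 := by
  split <;> simp

lemma hA (n : ℕ) : A (n + 3) = 2 * A (n + 2) + B n := by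
  rw [A, show (n + 3) = (n + 2) + 1 from rfl, sum_cons, Fin.sum_univ_three, A, B,
    Finset.mul_sum, ← Finset.sum_add_distrib, ← Finset.sum_add_distrib,
    ← Finset.sum_add_distrib]
  apply Finset.sum_congr rfl
  intro v _
  simp only [sStat_cons, pow_add, zpow_ite, cons_one, Fin.cons_zero, zi, z]
  norm_num
  split_ifs <;> ring

lemma hB (n : ℕ) : B (n + 1) = 2 * Cs n + D n := by
  have e : B (n + 1) = ∑ w : Fin ((n + 2) + 1) → Fin 3, z ^ sStat w * zi (w 1) := rfl
  rw [e, sum_cons, Fin.sum_univ_three, Cs, D,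
    Finset.mul_sum, ← Finset.sum_add_distrib, ← Finset.sum_add_distrib,
    ← Finset.sum_add_distrib]
  apply Finset.sum_congr rfl
  intro v _
  simp only [sStat_cons, pow_add, zpow_ite, cons_one, Fin.cons_zero, zi, z]
  norm_num
  split_ifs <;> ring

lemma hC (n : ℕ) : Cs (n + 1) = (1 + z) * A (n + 2) + B n := by
  have e : Cs (n + 1) = ∑ w : Fin ((n + 2) + 1) → Fin 3, z ^ sStat w * zi (w 0) := rfl
  rw [e, sum_cons, Fin.sum_univ_three, A, B,
    Finset.mul_sum, ← Finset.sum_add_distrib, ← Finset.sum_add_distrib,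
    ← Finset.sum_add_distrib]
  apply Finset.sum_congr rfl
  intro v _
  simp only [sStat_cons, pow_add, zpow_ite, cons_one, Fin.cons_zero, zi, z]
  norm_num
  split_ifs <;> ring

lemma hD (n : ℕ) : D (n + 1) = (1 + z) * Cs n + D n := by
  have e : D (n + 1) = ∑ w : Fin ((n + 2) + 1) → Fin 3,
      z ^ sStat w * zi (w 0) * zi (w 1) := rfl
  rw [e, sum_cons, Fin.sum_univ_three, Cs, D,
    Finset.mul_sum, ← Finset.sum_add_distrib, ← Finset.sum_add_distrib,
    ← Finset.sum_add_distrib]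
  apply Finset.sum_congr rfl
  intro v _
  simp only [sStat_cons, pow_add, zpow_ite, cons_one, Fin.cons_zero, zi, z]
  norm_num
  split_ifs <;> ring

lemma vA0 : A 0 = 1 := by
  simp [A, sStat_small]

lemma vA1 : A 1 = 3 := by
  rw [A, Finset.sum_congr rfl
    (fun w _ => by rw [sStat_small (by norm_num) w, pow_zero] :
      ∀ w ∈ Finset.univ, (Polynomial.X : Polynomial ℤ) ^ sStat w = 1)]
  simp

lemma vA2 : A 2 = 9 := by
  rw [A, Finset.sum_congr rfl
    (fun w _ => by rw [sStat_small (by norm_num) w, pow_zero] :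
      ∀ w ∈ Finset.univ, (Polynomial.X : Polynomial ℤ) ^ sStat w = 1)]
  simp

lemma vB0 : B 0 = 6 + 3 * z := by
  rw [B, Finset.sum_congr rfl
    (fun w _ => by rw [sStat_small (by norm_num) w, pow_zero, one_mul] :
      ∀ w ∈ Finset.univ, z ^ sStat w * zi (w 1) = zi (w 1))]
  rw [← (finTwoArrowEquiv (Fin 3)).symm.sum_comp (fun w => zi (w 1))]
  simp [finTwoArrowEquiv, zi, Fin.sum_univ_three, Fintype.sum_prod_type]
  ring

lemma vC0 : Cs 0 = 6 + 3 * z := by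
  rw [Cs, Finset.sum_congr rfl
    (fun w _ => by rw [sStat_small (by norm_num) w, pow_zero, one_mul] :
      ∀ w ∈ Finset.univ, z ^ sStat w * zi (w 0) = zi (w 0))]
  rw [← (finTwoArrowEquiv (Fin 3)).symm.sum_comp (fun w => zi (w 0))]
  simp [finTwoArrowEquiv, zi, Fin.sum_univ_three, Fintype.sum_prod_type]
  ring

lemma vD0 : D 0 = (2 + z) ^ 2 := by
  rw [D, Finset.sum_congr rfl
    (fun w _ => by rw [sStat_small (by norm_num) w, pow_zero, one_mul] :
      ∀ w ∈ Finset.univ, z ^ sStat w * zi (w 0) * zi (w 1) = zi (w 0) * zi (w 1))]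
  rw [← (finTwoArrowEquiv (Fin 3)).symm.sum_comp (fun w => zi (w 0) * zi (w 1))]
  simp [finTwoArrowEquiv, zi, Fin.sum_univ_three, Fintype.sum_prod_type]
  ring

lemma hB' (n : ℕ) : B n = A (n + 3) - 2 * A (n + 2) := by linear_combination - hA n

lemma hD2 (n : ℕ) : D (n + 1) = B (n + 1) - (1 - z) * Cs n := by
  linear_combination hD n - hB n

lemma hC' : ∀ n, Cs n = A (n + 2) - (1 - z) * A (n + 1)
  | 0 => by rw [vC0, vA2, vA1]; ring
  | (m + 1) => by
    have h1 : Cs (m + 1) = (1 + z) * A (m + 2) + B m := hC m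
    have h2 : A (m + 3) = 2 * A (m + 2) + B m := hA m
    show Cs (m + 1) = A (m + 3) - (1 - z) * A (m + 2)
    linear_combination h1 - h2

lemma vA3 : A 3 = 24 + 3 * z := by
  have h1 : A 3 = 2 * A 2 + B 0 := hA 0
  linear_combination h1 + 2 * vA2 + vB0

lemma vB1 : B 1 = 16 + 10 * z + z ^ 2 := by
  have h1 : B 1 = 2 * Cs 0 + D 0 := hB 0
  linear_combination h1 + 2 * vC0 + vD0

lemma vA4 : A 4 = 64 + 16 * z + z ^ 2 := by
  have h1 : A 4 = 2 * A 3 + B 1 := hA 1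
  linear_combination h1 + 2 * vA3 + vB1

lemma hq : ∀ n, A (n + 4) = 3 * A (n + 3) - 3 * (1 - z) * A (n + 1) + (1 - z) ^ 2 * A n
  | 0 => by
    show A 4 = 3 * A 3 - 3 * (1 - z) * A 1 + (1 - z) ^ 2 * A 0
    rw [vA4, vA3, vA1, vA0]; ring
  | (m + 1) => by
    have h1 : A (m + 5) = 2 * A (m + 4) + B (m + 2) := hA (m + 2)
    have h2 : B (m + 2) = 2 * Cs (m + 1) + D (m + 1) := hB (m + 1)
    have h3 : D (m + 1) = B (m + 1) - (1 - z) * Cs m := hD2 m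
    have h4 : B (m + 1) = A (m + 4) - 2 * A (m + 3) := hB' (m + 1)
    have h5 : Cs (m + 1) = A (m + 3) - (1 - z) * A (m + 2) := hC' (m + 1)
    have h6 : Cs m = A (m + 2) - (1 - z) * A (m + 1) := hC' m
    show A (m + 5) = 3 * A (m + 4) - 3 * (1 - z) * A (m + 2) + (1 - z) ^ 2 * A (m + 1)
    linear_combination h1 + h2 + 2 * h5 + h3 + h4 - (1 - z) * h6


end Stmt8Aux

open Stmt8Aux in
/-- `A_3(q,z) = Σ_w q^{|w|} z^{s(w)} = 1/((1 − q²(1−z))(1 − 3q − q²(z−1)))`,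
as an identity of formal power series in `q` over `ℤ[z]`. -/
theorem stmt8 :
    (1 - PowerSeries.X ^ 2 *
        (1 - PowerSeries.C (Polynomial.X : Polynomial ℤ))) *
    (1 - (3 * PowerSeries.X + PowerSeries.X ^ 2 *
        (PowerSeries.C (Polynomial.X : Polynomial ℤ) - 1))) *
    PowerSeries.mk (fun n => ∑ w : Fin n → Fin 3,
        (Polynomial.X : Polynomial ℤ) ^ sStat w) = 1 := by
  have hm : PowerSeries.mk (fun n => ∑ w : Fin n → Fin 3,
      (Polynomial.X : Polynomial ℤ) ^ sStat w) = PowerSeries.mk A := rfl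
  rw [hm]
  have key : (1 - PowerSeries.X ^ 2 *
        (1 - PowerSeries.C (Polynomial.X : Polynomial ℤ))) *
      (1 - (3 * PowerSeries.X + PowerSeries.X ^ 2 *
        (PowerSeries.C (Polynomial.X : Polynomial ℤ) - 1))) *
      PowerSeries.mk A
      = PowerSeries.mk A
        - PowerSeries.C (3 : Polynomial ℤ) * (PowerSeries.mk A * PowerSeries.X)
        + PowerSeries.C (3 * (1 - Polynomial.X) : Polynomial ℤ) *
            (PowerSeries.mk A * PowerSeries.X ^ 3)
        - PowerSeries.C ((1 - Polynomial.X) ^ 2 : Polynomial ℤ) *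
            (PowerSeries.mk A * PowerSeries.X ^ 4) := by
    simp only [map_sub, map_one, map_mul, map_pow, map_ofNat]
    ring
  rw [key]
  refine PowerSeries.ext fun n => ?_
  simp only [map_sub, map_add, PowerSeries.coeff_C_mul, PowerSeries.coeff_mul_X_pow',
    PowerSeries.coeff_mk, PowerSeries.coeff_one]
  rcases n with _ | _ | _ | _ | m
  · norm_num [vA0]
  · norm_num [vA1, vA0]
  · norm_num [vA2, vA1]
  · norm_num [vA3, vA2, vA0, z]
    ring
  · rw [show m + 1 + 1 + 1 + 1 = m + 4 from by omega]
    norm_num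
    rw [show m + 4 - 3 = m + 1 from by omega]
    have hq' := hq m
    rw [z] at hq'
    linear_combination hq'
end

section
/- The number of words of length 2n over {1,2,3} with no index i such that w_{i+2} − w_i = 2 is (F(2n))², where F(m) is the m-th Fibonacci number with F(0)=1, F(1)=1 (i.e., 1/(1−3q+q²) = Σ F(2n) q^n). -/
open Finset List

/-- allowed adjacency: not (0 then 2) -/
def R3 (a b : Fin 3) : Prop := ¬(a = 0 ∧ b = 2)

instance : DecidableRel R3 := fun a b => by unfold R3; infer_instance

/-- (valid lists of length n, valid lists of length n with head ≠ 2) -/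
def V : ℕ → Finset (List (Fin 3)) × Finset (List (Fin 3))
  | 0 => ({[]}, {[]})
  | n+1 => ((V n).2.image (List.cons 0) ∪ ((V n).1.image (List.cons 1) ∪ (V n).1.image (List.cons 2)),
            (V n).2.image (List.cons 0) ∪ (V n).1.image (List.cons 1))

lemma mem_V (n : ℕ) (l : List (Fin 3)) :
    (l ∈ (V n).1 ↔ l.length = n ∧ l.Chain' R3) ∧
    (l ∈ (V n).2 ↔ l.length = n ∧ l.Chain' R3 ∧ l.head? ≠ some 2) := by
  induction n generalizing l with
  | zero =>
    constructor <;> simp [V] <;> intro h <;> subst h <;> simp [List.Chain']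
  | succ n ih =>
    have key : ∀ a : Fin 3, ∀ t, (a :: t).Chain' R3 ↔ ((a = 0 → t.head? ≠ some 2) ∧ t.Chain' R3) := by
      intro a t
      simp only [List.Chain']
      rw [List.isChain_cons]
      constructor
      · rintro ⟨h1, h2⟩
        refine ⟨fun ha h2' => ?_, h2⟩
        obtain ⟨y, hy⟩ : ∃ y, t.head? = some y := ⟨2, h2'⟩
        exact (h1 y hy) ⟨ha, by rw [h2'] at hy; exact (Option.some_inj.mp hy).symm⟩
      · rintro ⟨h1, h2⟩
        refine ⟨fun y hy => ?_, h2⟩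
        rintro ⟨ha, hy2⟩
        exact h1 ha (by rw [hy, hy2])
    constructor
    · simp only [V, mem_union, mem_image]
      constructor
      · rintro (⟨t, ht, rfl⟩ | ⟨t, ht, rfl⟩ | ⟨t, ht, rfl⟩)
        · obtain ⟨hl, hc, hh⟩ := (ih t).2.mp ht
          exact ⟨by simp [hl], (key _ _).mpr ⟨fun _ => hh, hc⟩⟩
        · obtain ⟨hl, hc⟩ := (ih t).1.mp ht
          exact ⟨by simp [hl], (key _ _).mpr ⟨by simp, hc⟩⟩
        · obtain ⟨hl, hc⟩ := (ih t).1.mp ht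
          exact ⟨by simp [hl], (key _ _).mpr ⟨by simp, hc⟩⟩
      · rintro ⟨hl, hc⟩
        match l with
        | [] => simp at hl
        | a :: t =>
          obtain ⟨h1, h2⟩ := (key a t).mp hc
          have hlt : t.length = n := by simpa using hl
          fin_cases a
          · exact Or.inl ⟨t, (ih t).2.mpr ⟨hlt, h2, h1 rfl⟩, rfl⟩
          · exact Or.inr (Or.inl ⟨t, (ih t).1.mpr ⟨hlt, h2⟩, rfl⟩)
          · exact Or.inr (Or.inr ⟨t, (ih t).1.mpr ⟨hlt, h2⟩, rfl⟩)
    · simp only [V, mem_union, mem_image]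
      constructor
      · rintro (⟨t, ht, rfl⟩ | ⟨t, ht, rfl⟩)
        · obtain ⟨hl, hc, hh⟩ := (ih t).2.mp ht
          refine ⟨by simp [hl], (key _ _).mpr ⟨fun _ => hh, hc⟩, by simp⟩
        · obtain ⟨hl, hc⟩ := (ih t).1.mp ht
          refine ⟨by simp [hl], (key _ _).mpr ⟨by simp, hc⟩, by simp⟩
      · rintro ⟨hl, hc, hh⟩
        match l with
        | [] => simp at hl
        | a :: t =>
          obtain ⟨h1, h2⟩ := (key a t).mp hc
          have hlt : t.length = n := by simpa using hl
          have ha : a ≠ 2 := by simpa using hh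
          fin_cases a
          · exact Or.inl ⟨t, (ih t).2.mpr ⟨hlt, h2, h1 rfl⟩, rfl⟩
          · exact Or.inr ⟨t, (ih t).1.mpr ⟨hlt, h2⟩, rfl⟩
          · exact absurd rfl ha

lemma card_V (n : ℕ) :
    (V n).1.card = Nat.fib (2*n+2) ∧ (V n).2.card = Nat.fib (2*n+1) := by
  induction n with
  | zero => simp [V]
  | succ n ih =>
    have hinj : ∀ a : Fin 3, Set.InjOn (List.cons a) ((V n).1 ∪ (V n).2 : Finset _) := by
      intro a x _ y _ h; exact (List.cons_eq_cons.mp h).2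
    have hd : ∀ (a b : Fin 3) (s t : Finset (List (Fin 3))), a ≠ b →
        Disjoint (s.image (List.cons a)) (t.image (List.cons b)) := by
      intro a b s t hab
      simp only [Finset.disjoint_left, mem_image]
      rintro x ⟨u, _, rfl⟩ ⟨v, _, hv⟩
      exact hab ((List.cons_eq_cons.mp hv.symm).1)
    have hci : ∀ (a : Fin 3) (s : Finset (List (Fin 3))), (s.image (List.cons a)).card = s.card :=
      fun a s => Finset.card_image_of_injective s (fun x y h => (List.cons_eq_cons.mp h).2)
    constructor
    · show ((V n).2.image (List.cons 0) ∪ ((V n).1.image (List.cons 1) ∪ (V n).1.image (List.cons 2))).card = _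
      rw [Finset.card_union_of_disjoint, Finset.card_union_of_disjoint (hd _ _ _ _ (by decide)),
        hci, hci, hci]
      · rw [ih.1, ih.2]
        have := Nat.fib_add_two (n := 2*n+2)
        have := Nat.fib_add_two (n := 2*n+1)
        have := Nat.fib_add_two (n := 2*n)
        simp only [show 2*(n+1)+2 = 2*n+2+2 by ring] at *
        ring_nf at *
        omega
      · rw [Finset.disjoint_union_right]
        exact ⟨hd _ _ _ _ (by decide), hd _ _ _ _ (by decide)⟩
    · show ((V n).2.image (List.cons 0) ∪ (V n).1.image (List.cons 1)).card = _
      rw [Finset.card_union_of_disjoint (hd _ _ _ _ (by decide)), hci, hci, ih.1, ih.2]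
      have := Nat.fib_add_two (n := 2*n+1)
      simp only [show 2*(n+1)+1 = 2*n+1+2 by ring] at *
      ring_nf at *
      omega

lemma val_iff : ∀ (a b : Fin 3), ((b:ℕ) = (a:ℕ)+2) ↔ (a = 0 ∧ b = 2) := by decide

lemma pred_iff_chain (n : ℕ) (x : Fin n → Fin 3) :
    (¬∃ k l : Fin n, (l:ℕ) = (k:ℕ)+1 ∧ ((x l : ℕ) = (x k : ℕ)+2)) ↔
      (List.ofFn x).Chain' R3 := by
  simp only [List.Chain']
  rw [List.isChain_iff_getElem]
  simp only [List.length_ofFn, List.getElem_ofFn]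
  constructor
  · intro h i hi
    rintro ⟨h0, h2⟩
    refine h ⟨⟨i, by omega⟩, ⟨i+1, by omega⟩, rfl, ?_⟩
    rw [val_iff _ _]
    constructor
    · convert h0 using 2
    · convert h2 using 2
  · rintro h ⟨k, l, hl, hval⟩
    rw [val_iff _ _] at hval
    have hk : (k:ℕ) + 1 < n := by omega
    refine h k hk ⟨?_, ?_⟩
    · convert hval.1 using 2
    · convert hval.2 using 2
      exact Fin.ext (by simp [hl])

lemma countP1 (n : ℕ) :
    Nat.card {x : Fin n → Fin 3 //
      ¬∃ k l : Fin n, (l:ℕ) = (k:ℕ)+1 ∧ ((x l : ℕ) = (x k : ℕ)+2)} = Nat.fib (2*n+2) := by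
  rw [Nat.card_eq_fintype_card, Fintype.card_subtype, ← (card_V n).1]
  apply Finset.card_bij (fun x _ => List.ofFn x)
  · intro x hx
    rw [Finset.mem_filter] at hx
    exact (mem_V n _).1.mpr ⟨List.length_ofFn (f := x), (pred_iff_chain n x).mp hx.2⟩
  · intro x _ y _ h
    have := List.ofFn_injective h
    exact funext_iff.mpr (fun i => congrFun this i)
  · intro l hl
    obtain ⟨hlen, hch⟩ := (mem_V n l).1.mp hl
    refine ⟨fun i => l.get ⟨i, by omega⟩, ?_, ?_⟩
    · rw [Finset.mem_filter]
      refine ⟨mem_univ _, ?_⟩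
      rw [pred_iff_chain]
      convert hch using 1
      apply List.ext_get (by simp [hlen])
      intro i h1 h2
      simp [List.get_ofFn]
    · apply List.ext_get (by simp [hlen])
      intro i h1 h2
      simp [List.get_ofFn]

def parityEquiv (n : ℕ) : (Fin (2*n) → Fin 3) ≃ ((Fin n → Fin 3) × (Fin n → Fin 3)) where
  toFun w := (fun k => w ⟨2*(k:ℕ), by omega⟩, fun k => w ⟨2*(k:ℕ)+1, by omega⟩)
  invFun p := fun i => if h : (i : ℕ) % 2 = 0 then p.1 ⟨(i:ℕ)/2, by omega⟩
    else p.2 ⟨(i:ℕ)/2, by omega⟩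
  left_inv w := by
    funext i
    dsimp only
    by_cases h : (i:ℕ) % 2 = 0
    · rw [dif_pos h]; exact congrArg w (Fin.ext (by simp; omega))
    · rw [dif_neg h]; exact congrArg w (Fin.ext (by simp; omega))
  right_inv p := by
    apply Prod.ext
    · funext k
      show (if h : (2*(k:ℕ)) % 2 = 0 then _ else _) = p.1 k
      rw [dif_pos (by omega)]
      exact congrArg p.1 (Fin.ext (by simp))
    · funext k
      show (if h : (2*(k:ℕ)+1) % 2 = 0 then _ else _) = p.2 k
      rw [dif_neg (by omega)]
      exact congrArg p.2 (Fin.ext (by simp; omega))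

lemma split_iff (n : ℕ) (w : Fin (2*n) → Fin 3) :
    (¬ ∃ i j : Fin (2*n), (j:ℕ) = (i:ℕ)+2 ∧ ((w j:ℕ) = (w i:ℕ)+2)) ↔
    ((¬∃ k l : Fin n, (l:ℕ) = (k:ℕ)+1 ∧
        (((parityEquiv n w).1 l : ℕ) = ((parityEquiv n w).1 k : ℕ)+2)) ∧
     (¬∃ k l : Fin n, (l:ℕ) = (k:ℕ)+1 ∧
        (((parityEquiv n w).2 l : ℕ) = ((parityEquiv n w).2 k : ℕ)+2))) := by
  rw [← not_or]
  apply not_congr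
  simp only [parityEquiv, Equiv.coe_fn_mk]
  constructor
  · rintro ⟨i, j, hj, hv⟩
    have key : ∀ (a b : Fin (2*n)), a = j → b = i → ((w a : ℕ) = (w b : ℕ) + 2) := by
      rintro a b rfl rfl; exact hv
    by_cases h : (i:ℕ) % 2 = 0
    · exact Or.inl ⟨⟨(i:ℕ)/2, by omega⟩, ⟨(i:ℕ)/2+1, by omega⟩, rfl,
        key _ _ (Fin.ext (by simp; omega)) (Fin.ext (by simp; omega))⟩
    · exact Or.inr ⟨⟨(i:ℕ)/2, by omega⟩, ⟨(i:ℕ)/2+1, by omega⟩, rfl,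
        key _ _ (Fin.ext (by simp; omega)) (Fin.ext (by simp; omega))⟩
  · rintro (⟨k, l, hl, hv⟩ | ⟨k, l, hl, hv⟩)
    · have key : ∀ (a b : Fin n), a = l → b = k →
          ((w ⟨2*(a:ℕ), by omega⟩ : ℕ) = (w ⟨2*(b:ℕ), by omega⟩ : ℕ) + 2) := by
        rintro a b rfl rfl; exact hv
      exact ⟨⟨2*(k:ℕ), by omega⟩, ⟨2*(k:ℕ)+2, by omega⟩, by simp,
        by
          have := key ⟨(k:ℕ)+1, by omega⟩ k (Fin.ext (by simp [hl])) rfl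
          convert this using 3
          exact Fin.ext (by simp only [Fin.val_mk]; omega)⟩
    · have key : ∀ (a b : Fin n), a = l → b = k →
          ((w ⟨2*(a:ℕ)+1, by omega⟩ : ℕ) = (w ⟨2*(b:ℕ)+1, by omega⟩ : ℕ) + 2) := by
        rintro a b rfl rfl; exact hv
      exact ⟨⟨2*(k:ℕ)+1, by omega⟩, ⟨2*(k:ℕ)+3, by omega⟩, by simp,
        by
          have := key ⟨(k:ℕ)+1, by omega⟩ k (Fin.ext (by simp [hl])) rfl
          convert this using 3
          exact Fin.ext (by simp only [Fin.val_mk]; omega)⟩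

theorem countMain (n : ℕ) :
    Nat.card {w : Fin (2 * n) → Fin 3 //
      ¬ ∃ i j : Fin (2 * n), (j : ℕ) = (i : ℕ) + 2 ∧ ((w j : ℕ) = (w i : ℕ) + 2)} =
      (Nat.fib (2 * n + 2)) ^ 2 := by
  have e1 : {w : Fin (2 * n) → Fin 3 //
      ¬ ∃ i j : Fin (2 * n), (j : ℕ) = (i : ℕ) + 2 ∧ ((w j : ℕ) = (w i : ℕ) + 2)} ≃
      {p : (Fin n → Fin 3) × (Fin n → Fin 3) //
        (¬∃ k l : Fin n, (l:ℕ) = (k:ℕ)+1 ∧ ((p.1 l : ℕ) = (p.1 k : ℕ)+2)) ∧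
        (¬∃ k l : Fin n, (l:ℕ) = (k:ℕ)+1 ∧ ((p.2 l : ℕ) = (p.2 k : ℕ)+2))} :=
    Equiv.subtypeEquiv (parityEquiv n) (fun w => split_iff n w)
  rw [Nat.card_congr (e1.trans (Equiv.subtypeProdEquivProd
      (p := fun x : Fin n → Fin 3 => ¬∃ k l : Fin n, (l:ℕ) = (k:ℕ)+1 ∧ ((x l : ℕ) = (x k : ℕ)+2))
      (q := fun x : Fin n → Fin 3 => ¬∃ k l : Fin n, (l:ℕ) = (k:ℕ)+1 ∧ ((x l : ℕ) = (x k : ℕ)+2)))),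
    Nat.card_prod, countP1]
  ring


open PowerSeries in
theorem psPart :
    (1 - 3 * PowerSeries.X + PowerSeries.X ^ 2) *
      PowerSeries.mk (fun m => (Nat.fib (2 * m + 2) : ℤ)) = 1 := by
  set S := PowerSeries.mk (fun m => (Nat.fib (2 * m + 2) : ℤ)) with hS
  have h3 : (3 : ℤ⟦X⟧) = PowerSeries.C (R := ℤ) 3 := (map_ofNat (PowerSeries.C (R := ℤ)) 3).symm
  have h1 : (1 - 3 * PowerSeries.X + PowerSeries.X ^ 2) * S
      = S - (PowerSeries.C (R := ℤ) 3) * (PowerSeries.X * S) + PowerSeries.X ^ 2 * S := by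
    rw [← h3]; ring
  rw [h1]
  ext m
  have key : ∀ k : ℕ, (Nat.fib (2*k+4) : ℤ) + Nat.fib (2*k) = 3 * Nat.fib (2*k+2) := by
    intro k
    have e1 := Nat.fib_add_two (n := 2*k+2)
    have e2 := Nat.fib_add_two (n := 2*k+1)
    have e3 := Nat.fib_add_two (n := 2*k)
    have : Nat.fib (2*k+4) + Nat.fib (2*k) = 3 * Nat.fib (2*k+2) := by
      simp only [show 2*k+2+2 = 2*k+4 by ring, show 2*k+1+2 = 2*k+3 by ring,
        show 2*k+1+1 = 2*k+2 by ring, show 2*k+2+1 = 2*k+3 by ring] at e1 e2 e3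
      omega
    exact_mod_cast congrArg (Nat.cast : ℕ → ℤ) this
  match m with
  | 0 =>
    simp [PowerSeries.coeff_C_mul, PowerSeries.coeff_X_pow_mul', hS]
  | 1 =>
    rw [map_add, map_sub, PowerSeries.coeff_C_mul, PowerSeries.coeff_succ_X_mul,
      PowerSeries.coeff_X_pow_mul']
    norm_num [hS, PowerSeries.coeff_one]
  | (k+2) =>
    rw [map_add, map_sub, PowerSeries.coeff_C_mul, PowerSeries.coeff_succ_X_mul,
      PowerSeries.coeff_X_pow_mul S 2 k]
    simp only [hS, PowerSeries.coeff_mk, PowerSeries.coeff_one, Nat.add_eq_zero, and_false,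
      if_false]
    have hk := key (k+1)
    rw [if_neg (by omega : ¬(k = 0 ∧ 2 = 0)),
      show 2*(k+2)+2 = 2*(k+1)+4 by ring, show 2*k+2 = 2*(k+1) by ring]
    linarith



/-- Words of length `2n` over {1,2,3} (modeled as `Fin (2*n) → Fin 3`, letters
`(w i : ℕ) + 1`) with no index `i` such that `w_{i+2} − w_i = 2` are counted by
`(F(2n))²`, where `F` is the Fibonacci sequence normalized by `F(0) = 1`,
`F(1) = 2` (i.e. `F(m) = Nat.fib (m+2)`, equivalently
`Σ F(n) qⁿ = (1+q)/(1−q−q²)`); moreover `Σ_n F(2n) qⁿ = 1/(1−3q+q²)`. -/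
theorem stmt9 (n : ℕ) :
    Nat.card {w : Fin (2 * n) → Fin 3 //
      ¬ ∃ i j : Fin (2 * n), (j : ℕ) = (i : ℕ) + 2 ∧ ((w j : ℕ) = (w i : ℕ) + 2)} =
      (Nat.fib (2 * n + 2)) ^ 2 ∧
    (1 - 3 * PowerSeries.X + PowerSeries.X ^ 2) *
      PowerSeries.mk (fun m => (Nat.fib (2 * m + 2) : ℤ)) = 1 := by
  exact ⟨countMain n, psPart⟩
end

section
/- The number of words of length 2n+1 over {1,2,3} with no index i such that w_{i+2} − w_i = 2 is F(2n)·F(2n+2), where the Fibonacci numbers are normalized by Σ_{n≥0} F(n)q^n = (1+q)/(1−q−q²). -/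
open Finset

def ok (a c : Fin 3) : Prop := ¬(a = 0 ∧ c = 2)

instance (a c : Fin 3) : Decidable (ok a c) := by unfold ok; infer_instance

def Good (m : ℕ) (w : Fin m → Fin 3) : Prop :=
  ∀ i : Fin m, ∀ h : (i : ℕ) + 2 < m, ok (w i) (w ⟨(i : ℕ) + 2, h⟩)

instance (m : ℕ) : DecidablePred (Good m) := fun w => by
  unfold Good; infer_instance

def N (m : ℕ) (a b : Fin 3) : ℕ :=
  Fintype.card {w : Fin (m + 2) → Fin 3 // Good (m + 2) w ∧ w 0 = a ∧ w 1 = b}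

def e (k : ℕ) (a : Fin 3) : ℕ := if a = 0 then Nat.fib (2 * k + 1) else Nat.fib (2 * k + 2)

lemma cons_succ_mk (m : ℕ) (a : Fin 3) (v : Fin (m + 2) → Fin 3) (j : ℕ) (h : j + 1 < m + 3) :
    (Fin.cons a v : Fin (m + 3) → Fin 3) ⟨j + 1, h⟩ = v ⟨j, by omega⟩ := by
  have h2 : (⟨j + 1, h⟩ : Fin (m + 3)) = Fin.succ ⟨j, by omega⟩ := by
    rw [Fin.ext_iff]; simp
  rw [h2, Fin.cons_succ]

lemma cons_zero_mk (m : ℕ) (a : Fin 3) (v : Fin (m + 2) → Fin 3) (h : 0 < m + 3) :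
    (Fin.cons a v : Fin (m + 3) → Fin 3) ⟨0, h⟩ = a := by
  have h2 : (⟨0, h⟩ : Fin (m + 3)) = 0 := by rw [Fin.ext_iff]; simp
  rw [h2, Fin.cons_zero]

lemma good_iff (m : ℕ) (w : Fin m → Fin 3) :
    Good m w ↔ ∀ i : ℕ, ∀ h : i + 2 < m, ok (w ⟨i, by omega⟩) (w ⟨i + 2, h⟩) :=
  ⟨fun h i hi => h ⟨i, by omega⟩ hi, fun h i hi => h (i : ℕ) hi⟩

lemma good_cons (m : ℕ) (a : Fin 3) (v : Fin (m + 2) → Fin 3) :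
    Good (m + 3) (Fin.cons a v) ↔ Good (m + 2) v ∧ ok a (v 1) := by
  have hone : (⟨1, by omega⟩ : Fin (m + 2)) = 1 := by rw [Fin.ext_iff]; simp
  rw [good_iff, good_iff]
  constructor
  · intro h
    refine ⟨fun i hi => ?_, ?_⟩
    · have h2 := h (i + 1) (by omega)
      have e2 : (⟨(i + 1) + 2, by omega⟩ : Fin (m + 3)) =
          ⟨(i + 2) + 1, by omega⟩ := by simp only [Fin.mk.injEq]; try omega
      rw [cons_succ_mk, e2, cons_succ_mk] at h2
      exact h2
    · have h0 := h 0 (by omega)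
      have e2 : (⟨(0 : ℕ) + 2, by omega⟩ : Fin (m + 3)) = ⟨1 + 1, by omega⟩ := by
        simp only [Fin.mk.injEq]
      rw [cons_zero_mk, e2, cons_succ_mk, hone] at h0
      exact h0
  · rintro ⟨hg, hok⟩ iv hi
    cases iv with
    | zero =>
      have e2 : (⟨(0 : ℕ) + 2, hi⟩ : Fin (m + 3)) = ⟨1 + 1, by omega⟩ := by
        simp only [Fin.mk.injEq]
      rw [e2, cons_succ_mk, cons_zero_mk, hone]
      exact hok
    | succ jv =>
      have e2 : (⟨(jv + 1) + 2, hi⟩ : Fin (m + 3)) = ⟨(jv + 2) + 1, by omega⟩ := by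
        simp only [Fin.mk.injEq]; try omega
      rw [e2, cons_succ_mk, cons_succ_mk]
      exact hg jv (by omega)

lemma N_succ (m : ℕ) (a b : Fin 3) :
    N (m + 1) a b = ∑ c : Fin 3, if ok a c then N m b c else 0 := by
  have h1 : N (m + 1) a b =
      Fintype.card {w : Fin (m + 3) → Fin 3 // Good (m + 3) w ∧ w 0 = a ∧ w 1 = b} := rfl
  rw [h1, Fintype.card_subtype]
  have h2 : #{w : Fin (m + 3) → Fin 3 | Good (m + 3) w ∧ w 0 = a ∧ w 1 = b} =
      #{v : Fin (m + 2) → Fin 3 | (Good (m + 2) v ∧ v 0 = b) ∧ ok a (v 1)} := by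
    apply Finset.card_nbij' Fin.tail (Fin.cons a)
    · intro w hw
      simp only [Finset.mem_coe, Finset.mem_filter, Finset.mem_univ, true_and] at hw ⊢
      obtain ⟨hg, h0, hb⟩ := hw
      have hc : Good (m + 3) (Fin.cons (w 0) (Fin.tail w)) := by
        rw [Fin.cons_self_tail]; exact hg
      rw [h0, good_cons] at hc
      refine ⟨⟨hc.1, ?_⟩, hc.2⟩
      show w (Fin.succ 0) = b
      simpa using hb
    · intro v hv
      simp only [Finset.mem_coe, Finset.mem_filter, Finset.mem_univ, true_and] at hv ⊢
      obtain ⟨⟨hg, h0⟩, hok⟩ := hv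
      refine ⟨(good_cons m a v).2 ⟨hg, hok⟩, by simp, ?_⟩
      show (Fin.cons a v : Fin (m + 3) → Fin 3) (Fin.succ 0) = b
      rw [Fin.cons_succ]; exact h0
    · intro w hw
      simp only [Finset.mem_coe, Finset.mem_filter, Finset.mem_univ, true_and] at hw
      rw [← hw.2.1, Fin.cons_self_tail]
    · intro v _
      simp
  rw [h2]
  rw [Finset.card_eq_sum_card_fiberwise (f := fun v => v 1) (t := Finset.univ)
    (fun x _ => Finset.mem_univ _)]
  refine Finset.sum_congr rfl fun c _ => ?_
  rw [Finset.filter_filter]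
  by_cases hc : ok a c
  · rw [if_pos hc, N, Fintype.card_subtype]
    congr 1
    apply Finset.filter_congr
    intro v _
    constructor
    · rintro ⟨⟨⟨hg, h0⟩, _⟩, h1⟩; exact ⟨hg, h0, h1⟩
    · rintro ⟨hg, h0, h1⟩; exact ⟨⟨⟨hg, h0⟩, h1 ▸ hc⟩, h1⟩
  · rw [if_neg hc, Finset.card_eq_zero, Finset.filter_eq_empty_iff]
    rintro v _ ⟨⟨_, hok⟩, h1⟩
    exact hc (h1 ▸ hok)

lemma N_zero (a b : Fin 3) : N 0 a b = 1 := by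
  rw [N, Fintype.card_eq_one_iff]
  refine ⟨⟨![a, b], fun i hi => absurd hi (by omega), rfl, rfl⟩, ?_⟩
  rintro ⟨w, hg, h0, h1⟩
  apply Subtype.ext
  funext i
  fin_cases i
  · exact h0
  · exact h1

lemma e_zero (a : Fin 3) : e 0 a = 1 := by
  unfold e; split <;> simp

lemma sum_e (k : ℕ) (a : Fin 3) :
    (∑ c : Fin 3, if ok a c then e k c else 0) = e (k + 1) a := by
  have h1 : Nat.fib (2 * (k + 1) + 1) = Nat.fib (2 * k + 1) + Nat.fib (2 * k + 2) := by
    rw [show 2 * (k + 1) + 1 = (2 * k + 1) + 2 by ring, Nat.fib_add_two]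
  have h2 : Nat.fib (2 * (k + 1) + 2) = Nat.fib (2 * k + 2) + Nat.fib (2 * (k + 1) + 1) := by
    rw [show 2 * (k + 1) + 2 = (2 * k + 2) + 2 by ring, Nat.fib_add_two,
      show 2 * (k + 1) + 1 = 2 * k + 3 by ring]
  fin_cases a <;>
    simp [Fin.sum_univ_three, ok, e] <;> omega

lemma N_closed (k : ℕ) :
    (∀ a b, N (2 * k) a b = e k a * e k b) ∧
      (∀ a b, N (2 * k + 1) a b = e (k + 1) a * e k b) := by
  induction k with
  | zero =>
    constructor
    · intro a b; rw [show 2 * 0 = 0 by ring, N_zero, e_zero, e_zero]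
    · intro a b
      rw [show 2 * 0 + 1 = 0 + 1 by ring, N_succ]
      rw [show e 0 b = 1 from e_zero b, mul_one, ← sum_e 0 a]
      refine Finset.sum_congr rfl fun c _ => ?_
      rw [N_zero, e_zero]
  | succ k ih =>
    have heven : ∀ a b, N (2 * (k + 1)) a b = e (k + 1) a * e (k + 1) b := by
      intro a b
      rw [show 2 * (k + 1) = (2 * k + 1) + 1 by ring, N_succ]
      have hc : ∀ c : Fin 3, (if ok a c then N (2 * k + 1) b c else 0) =
          e (k + 1) b * (if ok a c then e k c else 0) := by
        intro c; by_cases h : ok a c <;> simp [h, ih.2]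
      rw [Finset.sum_congr rfl fun c _ => hc c, ← Finset.mul_sum, sum_e, mul_comm]
    refine ⟨heven, fun a b => ?_⟩
    rw [show 2 * (k + 1) + 1 = (2 * (k + 1)) + 1 by ring, N_succ]
    have hc : ∀ c : Fin 3, (if ok a c then N (2 * (k + 1)) b c else 0) =
        e (k + 1) b * (if ok a c then e (k + 1) c else 0) := by
      intro c; by_cases h : ok a c <;> simp [h, heven]
    rw [Finset.sum_congr rfl fun c _ => hc c, ← Finset.mul_sum, sum_e, mul_comm]

lemma sum_e_total (j : ℕ) : ∑ a : Fin 3, e j a = Nat.fib (2 * j + 4) := by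
  have h1 : Nat.fib (2 * j + 3) = Nat.fib (2 * j + 1) + Nat.fib (2 * j + 2) :=
    Nat.fib_add_two
  have h2 : Nat.fib (2 * j + 4) = Nat.fib (2 * j + 2) + Nat.fib (2 * j + 3) :=
    Nat.fib_add_two
  simp [Fin.sum_univ_three, e]
  omega

lemma total_eq (m : ℕ) :
    Fintype.card {w : Fin (m + 2) → Fin 3 // Good (m + 2) w} =
      ∑ p : Fin 3 × Fin 3, N m p.1 p.2 := by
  rw [Fintype.card_subtype]
  rw [Finset.card_eq_sum_card_fiberwise (f := fun w => (w 0, w 1)) (t := Finset.univ)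
    (fun x _ => Finset.mem_univ _)]
  refine Finset.sum_congr rfl fun p _ => ?_
  rw [Finset.filter_filter, N, Fintype.card_subtype]
  congr 1
  apply Finset.filter_congr
  intro w _
  simp [Prod.ext_iff, and_assoc]

/-- Words of length `2n+1` over {1,2,3} (modeled as `Fin (2*n+1) → Fin 3`,
letters `(w i : ℕ) + 1`) with no index `i` such that `w_{i+2} − w_i = 2` are
counted by `F(2n)·F(2n+2)`, where `F` is the Fibonacci sequence normalized by
`Σ_{n≥0} F(n) qⁿ = (1+q)/(1−q−q²)`, i.e. `F(m) = Nat.fib (m+2)`. -/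
theorem stmt10 (n : ℕ) :
    Nat.card {w : Fin (2 * n + 1) → Fin 3 //
      ¬ ∃ i j : Fin (2 * n + 1), (j : ℕ) = (i : ℕ) + 2 ∧ ((w j : ℕ) = (w i : ℕ) + 2)} =
      Nat.fib (2 * n + 2) * Nat.fib (2 * n + 4) := by
  have key : ∀ (m : ℕ) (w : Fin m → Fin 3),
      (¬ ∃ i j : Fin m, (j : ℕ) = (i : ℕ) + 2 ∧ ((w j : ℕ) = (w i : ℕ) + 2)) ↔
        Good m w := by
    intro m w
    constructor
    · intro h i hi
      rintro ⟨hi0, hi2⟩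
      exact h ⟨i, ⟨(i : ℕ) + 2, hi⟩, rfl, by rw [hi0, hi2]; rfl⟩
    · rintro hg ⟨i, j, hj, hw⟩
      have hlt : (i : ℕ) + 2 < m := hj ▸ j.isLt
      have hj' : j = ⟨(i : ℕ) + 2, hlt⟩ := by rw [Fin.ext_iff]; exact hj
      have hv1 : (w i : ℕ) = 0 := by have := (w j).isLt; omega
      have hv2 : (w j : ℕ) = 2 := by omega
      refine hg i hlt ⟨?_, ?_⟩
      · exact Fin.ext hv1
      · rw [← hj']; exact Fin.ext hv2
  rw [Nat.card_eq_fintype_card]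
  cases n with
  | zero =>
    have htriv : ∀ w : Fin (2 * 0 + 1) → Fin 3,
        ¬ ∃ i j : Fin (2 * 0 + 1), (j : ℕ) = (i : ℕ) + 2 ∧ ((w j : ℕ) = (w i : ℕ) + 2) := by
      rintro w ⟨i, j, hj, _⟩
      have := i.isLt; have := j.isLt; omega
    rw [Fintype.card_congr (Equiv.subtypeUnivEquiv htriv)]
    simp [Nat.fib]
  | succ k =>
    rw [Fintype.card_congr (Equiv.subtypeEquivRight fun w => key _ w)]
    have h1 : Fintype.card {w : Fin (2 * (k + 1) + 1) → Fin 3 // Good (2 * (k + 1) + 1) w} =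
        Fintype.card {w : Fin ((2 * k + 1) + 2) → Fin 3 // Good ((2 * k + 1) + 2) w} := by
      congr 1 <;> omega
    rw [h1, total_eq, Fintype.sum_prod_type]
    have h2 : ∀ a b : Fin 3, N (2 * k + 1) a b = e (k + 1) a * e k b := (N_closed k).2
    simp only [h2]
    rw [← Finset.sum_mul_sum, sum_e_total, sum_e_total]
    rw [show 2 * (k + 1) + 2 = 2 * k + 4 by ring, show 2 * (k + 1) + 4 = 2 * k + 6 by ring,
      mul_comm]
end

section
/- The generating function B_3(q,z) = Σ_w q^{|w|} z^{t(w)}, summed over all words w over {1,2,3}, where t(w) counts indices i with w_{i+1} − w_i = 2, equals 1/(1 − 3q − q²(z−1)). -/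
/-- For a word `w` of length `n` over {1,2,3} (modeled as `Fin n → Fin 3`,
letters `(w i : ℕ) + 1`), `tStat w = |{i : w_{i+1} − w_i = 2}|`. -/
noncomputable def tStat {n : ℕ} (w : Fin n → Fin 3) : ℕ :=
  Nat.card {ij : Fin n × Fin n //
    (ij.2 : ℕ) = (ij.1 : ℕ) + 1 ∧ ((w ij.2 : ℕ) = (w ij.1 : ℕ) + 2)}

def gS {n : ℕ} (w : Fin n → Fin 3) : ℕ :=
  ∑ i : Fin n, ∑ j : Fin n,
    if (j : ℕ) = (i : ℕ) + 1 ∧ ((w j : ℕ) = (w i : ℕ) + 2) then 1 else 0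

lemma tStat_eq_gS {n : ℕ} (w : Fin n → Fin 3) : tStat w = gS w := by
  classical
  rw [tStat, Nat.card_eq_fintype_card, Fintype.card_subtype, gS,
    Finset.card_eq_sum_ones, Finset.sum_filter, ← Finset.sum_product']
  rfl

lemma gS_cons {n : ℕ} (w : Fin n → Fin 3) (c : Fin 3) :
    gS (Fin.cons c w) = gS w +
      ∑ j : Fin n, if (j : ℕ) = 0 ∧ ((w j : ℕ) = (c : ℕ) + 2) then 1 else 0 := by
  rw [gS, Fin.sum_univ_succ]
  simp only [Fin.sum_univ_succ, Fin.cons_zero, Fin.cons_succ, Fin.val_zero, Fin.val_succ]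
  rw [gS]
  have e1 : ∀ x : ℕ, ((0:ℕ) = x + 1) = False := by intro x; simp
  have e2 : ∀ x : ℕ, ((x:ℕ) + 1 = 1) = (x = 0) := by intro x; simp
  simp only [zero_add, e1, e2, false_and, if_false, add_left_inj, Finset.sum_const_zero,
    add_zero]
  ring

noncomputable def fP (n : ℕ) : Polynomial ℤ :=
  ∑ w : Fin n → Fin 3, (Polynomial.X : Polynomial ℤ) ^ gS w

lemma sum_cons (n : ℕ) (F : (Fin (n+1) → Fin 3) → Polynomial ℤ) :
    ∑ w : Fin (n+1) → Fin 3, F w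
      = ∑ c : Fin 3, ∑ w : Fin n → Fin 3, F (Fin.cons c w) := by
  rw [← (Fintype.sum_equiv (Fin.consEquiv fun _ : Fin (n+1) => Fin 3)
    (fun p => F (Fin.cons p.1 p.2)) F fun p => rfl)]
  exact Fintype.sum_prod_type _

lemma fP_succ (n : ℕ) : fP (n+1)
    = ∑ c : Fin 3, ∑ w : Fin n → Fin 3, (Polynomial.X : Polynomial ℤ) ^ gS (Fin.cons c w) := by
  rw [fP, sum_cons]

lemma fP_zero : fP 0 = 1 := by
  rw [fP, Finset.univ_unique, Finset.sum_singleton]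
  simp [gS]

lemma fP_one : fP 1 = 3 := by
  rw [fP_succ 0]
  have h : ∀ c : Fin 3, ∑ w : Fin 0 → Fin 3,
      (Polynomial.X : Polynomial ℤ) ^ gS (Fin.cons c w) = 1 := by
    intro c
    simp [gS]
  rw [Finset.sum_congr rfl fun c _ => h c, Fin.sum_univ_three]
  norm_num

lemma T_eq (n : ℕ) :
    ∑ w : Fin (n+1) → Fin 3,
        (if (w 0 : ℕ) = 2 then (Polynomial.X : Polynomial ℤ) ^ gS w else 0) = fP n := by
  rw [sum_cons, Fin.sum_univ_three]
  simp only [Fin.cons_zero]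
  norm_num
  rw [fP]
  refine Finset.sum_congr rfl fun w _ => ?_
  rw [gS_cons]
  have h0 : ∑ j : Fin n,
      (if (j : ℕ) = 0 ∧ ((w j : ℕ) = ((2 : Fin 3) : ℕ) + 2) then 1 else 0) = 0 := by
    refine Finset.sum_eq_zero fun j _ => ?_
    have := (w j).is_lt
    rw [if_neg]; omega
  rw [h0, add_zero]

lemma fP_rec (n : ℕ) : fP (n+2) = 3 * fP (n+1) + (Polynomial.X - 1) * fP n := by
  rw [fP_succ (n+1)]
  have key : ∀ (c : Fin 3) (w : Fin (n+1) → Fin 3),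
      gS (Fin.cons c w) = gS w + (if (w 0 : ℕ) = (c : ℕ) + 2 then 1 else 0) := by
    intro c w
    rw [gS_cons, Fin.sum_univ_succ]
    have e1 : ∀ x : ℕ, ((x:ℕ) + 1 = 0) = False := by intro x; simp
    simp [e1]
  rw [Finset.sum_congr rfl fun c _ => Finset.sum_congr rfl fun w _ => by
    rw [key c w, pow_add]]
  rw [Finset.sum_comm]
  have step : ∀ w : Fin (n+1) → Fin 3,
      ∑ c : Fin 3, (Polynomial.X : Polynomial ℤ) ^ gS w *
          Polynomial.X ^ (if (w 0 : ℕ) = (c : ℕ) + 2 then 1 else 0)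
        = 3 * Polynomial.X ^ gS w +
          (Polynomial.X - 1) * (if (w 0 : ℕ) = 2 then Polynomial.X ^ gS w else 0) := by
    intro w
    rw [Fin.sum_univ_three]
    have h3 := (w 0).is_lt
    by_cases h : (w 0 : ℕ) = 2
    · rw [if_pos h, if_pos, if_neg, if_neg]
      · ring
      all_goals omega
    · rw [if_neg h, if_neg, if_neg, if_neg]
      · ring
      all_goals omega
  rw [Finset.sum_congr rfl fun w _ => step w]
  rw [Finset.sum_add_distrib, ← Finset.mul_sum, ← Finset.mul_sum, T_eq,
    show (∑ w : Fin (n+1) → Fin 3, (Polynomial.X : Polynomial ℤ) ^ gS w) = fP (n+1) from rfl]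

/-- `B_3(q,z) = Σ_w q^{|w|} z^{t(w)} = 1/(1 − 3q − q²(z−1))`, as an identity of
formal power series in `q` over `ℤ[z]`. -/
theorem stmt12 :
    (1 - 3 * PowerSeries.X - PowerSeries.X ^ 2 *
        (PowerSeries.C (Polynomial.X : Polynomial ℤ) - 1)) *
    PowerSeries.mk (fun n => ∑ w : Fin n → Fin 3,
        (Polynomial.X : Polynomial ℤ) ^ tStat w) = 1 := by
  have hmk : PowerSeries.mk (fun n => ∑ w : Fin n → Fin 3,
      (Polynomial.X : Polynomial ℤ) ^ tStat w) = PowerSeries.mk fP := by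
    refine congrArg PowerSeries.mk (funext fun n => ?_)
    rw [fP]
    exact Finset.sum_congr rfl fun w _ => by rw [tStat_eq_gS]
  rw [hmk]
  have hC : (PowerSeries.C (Polynomial.X : Polynomial ℤ) - 1)
      = PowerSeries.C ((Polynomial.X : Polynomial ℤ) - 1) := by
    rw [map_sub, map_one]
  have h3 : (3 : PowerSeries (Polynomial ℤ)) = PowerSeries.C (3 : Polynomial ℤ) := by
    rw [map_ofNat]
  rw [hC, sub_mul, sub_mul, one_mul]
  have e1 : 3 * PowerSeries.X * PowerSeries.mk fP
      = PowerSeries.X ^ 1 * (PowerSeries.C (3 : Polynomial ℤ) * PowerSeries.mk fP) := by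
    rw [← h3]; ring
  have e2 : PowerSeries.X ^ 2 * PowerSeries.C ((Polynomial.X : Polynomial ℤ) - 1) *
      PowerSeries.mk fP = PowerSeries.X ^ 2 *
      (PowerSeries.C ((Polynomial.X : Polynomial ℤ) - 1) * PowerSeries.mk fP) := by
    rw [mul_assoc]
  rw [e1, e2]
  refine PowerSeries.ext fun n => ?_
  rw [map_sub, map_sub, PowerSeries.coeff_mk, PowerSeries.coeff_X_pow_mul',
    PowerSeries.coeff_X_pow_mul', PowerSeries.coeff_one,
    PowerSeries.coeff_C_mul, PowerSeries.coeff_C_mul,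
    PowerSeries.coeff_mk, PowerSeries.coeff_mk]
  rcases n with _ | _ | n
  · norm_num [fP_zero]
  · norm_num [fP_one, fP_zero]
  · rw [if_pos (by omega : (1:ℕ) ≤ n+1+1), if_pos (by omega : (2:ℕ) ≤ n+1+1),
      if_neg (by omega : ¬(n+1+1 = 0))]
    rw [show n+1+1-1 = n+1 from rfl, show n+1+1-2 = n from rfl, fP_rec n]
    ring
end
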